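/- arXiv:1311.7150 — 4 statements merged into one kernel-verified Lean document; each statement's English description precedes it below -/
import Mathlib

section
/- For all k ≥ 1 and all n > k, the group IA_n(k) is not generated by the set of its elements that are supported on splittings of F_n of rank less than k; that is, the subgroup of IA_n(k) generated by all elements of IA_n(k) supported on some splitting of rank < k is a proper subgroup of IA_n(k). -/
section Base

variable {G : Type*} [Group G]

instance lowerCentralSeries_characteristic (k : ℕ) :
    ((⊤ : Subgroup G).lowerCentralSeries k).Characteristic := by
  induction k with
  | zero => exact Subgroup.topCharacteristic
  | succ n ih => exact @Subgroup.commutator_characteristic G _ _ ⊤ ih Subgroup.topCharacteristic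

theorem char_apply {H : Subgroup G} [H.Characteristic] (φ : MulAut G) {x : G} (hx : x ∈ H) :
    φ x ∈ H := by
  have h : H.comap φ.toMonoidHom = H := Subgroup.characteristic_iff_comap_eq.mp inferInstance φ
  rw [← h] at hx
  exact hx

/-- The kernel of the action of `MulAut G` on `G ⧸ H`, for a subgroup `H` invariant under
all automorphisms: the automorphisms acting trivially on `G ⧸ H`. -/
def autActKernel (H : Subgroup G) (hchar : ∀ (φ : MulAut G) (x : G), x ∈ H → φ x ∈ H) :
    Subgroup (MulAut G) where
  carrier := {φ | ∀ x : G, φ x * x⁻¹ ∈ H}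
  one_mem' := by
    intro x
    simpa using H.one_mem
  mul_mem' := by
    intro a b ha hb x
    have h2 := H.mul_mem (hchar a _ (hb x)) (ha x)
    have heq : a (b x * x⁻¹) * (a x * x⁻¹) = (a * b) x * x⁻¹ := by
      simp [map_mul, map_inv, mul_assoc]
    rwa [heq] at h2
  inv_mem' := by
    intro a ha x
    have h1 : a⁻¹ ((a x * x⁻¹)⁻¹) ∈ H := hchar a⁻¹ _ (H.inv_mem (ha x))
    have heq : a⁻¹ ((a x * x⁻¹)⁻¹) = a⁻¹ x * x⁻¹ := by
      simp [map_mul, map_inv, mul_inv_rev]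
    rwa [heq] at h1

end Base

/-- `IAF n k` is the `k`-th term `IA_n(k)` of the Johnson filtration of `Aut(F_n)`:
the kernel of the action of `Aut(F_n)` on `F_n ⧸ γ_{k+1}(F_n)`.  (Here
`γ_{k+1}(F_n) = lowerCentralSeries (FreeGroup (Fin n)) k` since `γ_1 = lowerCentralSeries _ 0`.) -/
def IAF (n k : ℕ) : Subgroup (MulAut (FreeGroup (Fin n))) :=
  autActKernel ((⊤ : Subgroup (FreeGroup (Fin n))).lowerCentralSeries k) fun φ _ hx => char_apply φ hx

/-- `A` and `B` give a splitting of `F` as an internal free product `F = A ∗ B`. -/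
def IsFreeProductPair {F : Type*} [Group F] (A B : Subgroup F) : Prop :=
  Function.Bijective (Monoid.Coprod.lift A.subtype B.subtype)

/-- `φ` is supported on the splitting `A ∗ B`: it preserves `A` and restricts to the
identity on `B`. -/
def SupportedOn {F : Type*} [Group F] (φ : MulAut F) (A B : Subgroup F) : Prop :=
  A.map φ.toMonoidHom = A ∧ ∀ x ∈ B, φ x = x

/-- The subgroup `A` is generated by at most `r` elements; for a free group this says
exactly that the rank of `A` is at most `r`. -/
def RankLe {F : Type*} [Group F] (A : Subgroup F) (r : ℕ) : Prop :=
  ∃ S : Finset F, S.card ≤ r ∧ Subgroup.closure (S : Set F) = A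


open scoped Classical
open scoped commutatorElement

namespace JF

variable (n k : ℕ)

abbrev FG := FreeGroup (Fin n)
abbrev PA := MonoidAlgebra ℚ (FreeMonoid (Fin n))

instance : CoeFun (PA n) (fun _ => FreeMonoid (Fin n) → ℚ) := ⟨fun p => p.coeff⟩

/-- all words in the support have length ≥ m -/
def LenGe (m : ℕ) (p : PA n) : Prop := ∀ w ∈ p.coeff.support, m ≤ w.length

variable {n}

lemma lenGe_zero (p : PA n) : LenGe n 0 p := fun _ _ => Nat.zero_le _

lemma lenGe_zero_poly (m : ℕ) : LenGe n m (0 : PA n) := by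
  intro w hw
  simp at hw

lemma lenGe_of_eq {m : ℕ} {p q : PA n} (h : LenGe n m p) (e : p = q) : LenGe n m q := e ▸ h

lemma LenGe.mono {a b : ℕ} {p : PA n} (h : LenGe n a p) (hba : b ≤ a) : LenGe n b p :=
  fun w hw => le_trans hba (h w hw)

lemma LenGe.add {m : ℕ} {p q : PA n} (hp : LenGe n m p) (hq : LenGe n m q) :
    LenGe n m (p + q) := by
  intro w hw
  rcases Finset.mem_union.mp (Finsupp.support_add hw) with h | h
  · exact hp w h
  · exact hq w h

lemma LenGe.neg {m : ℕ} {p : PA n} (hp : LenGe n m p) : LenGe n m (-p) := by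
  intro w hw
  apply hp
  rw [MonoidAlgebra.coeff_neg, Finsupp.support_neg] at hw
  exact hw

lemma LenGe.sub {m : ℕ} {p q : PA n} (hp : LenGe n m p) (hq : LenGe n m q) :
    LenGe n m (p - q) := by
  rw [sub_eq_add_neg]; exact hp.add hq.neg

lemma LenGe.smul {m : ℕ} {p : PA n} (c : ℚ) (hp : LenGe n m p) : LenGe n m (c • p) := by
  intro w hw
  exact hp w (Finsupp.support_smul hw)

lemma LenGe.mul {a b : ℕ} {p q : PA n} (hp : LenGe n a p) (hq : LenGe n b q) :
    LenGe n (a + b) (p * q) := by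
  intro w hw
  have := MonoidAlgebra.support_coeff_mul_subset p q hw
  rcases Finset.mem_mul.mp this with ⟨u, hu, v, hv, huv⟩
  subst huv
  rw [FreeMonoid.length_mul]
  exact Nat.add_le_add (hp u hu) (hq v hv)

lemma LenGe.pow {p : PA n} (hp : LenGe n 1 p) : ∀ j, LenGe n j (p ^ j) := by
  intro j
  induction j with
  | zero => exact lenGe_zero _
  | succ t ih =>
      have := ih.mul hp
      rw [← pow_succ] at this
      exact this

lemma LenGe.single {w : FreeMonoid (Fin n)} {c : ℚ} (h : m ≤ w.length) :
    LenGe n m (MonoidAlgebra.single w c) := by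
  intro u hu
  have := Finsupp.support_single_subset hu
  simp only [Finset.mem_singleton] at this
  subst this; exact h

variable (n)

/-- the congruence identifying elements that differ in degrees ≥ k+2 -/
def rc : RingCon (PA n) where
  r a b := LenGe n (k + 2) (a - b)
  iseqv := by
    constructor
    · intro x
      show LenGe n (k + 2) (x - x)
      rw [sub_self]
      exact lenGe_zero_poly _
    · intro x y h
      show LenGe n (k + 2) (y - x)
      have := LenGe.neg h
      rw [neg_sub] at this
      exact this
    · intro x y z h1 h2
      show LenGe n (k + 2) (x - z)
      have := LenGe.add h1 h2
      rw [sub_add_sub_cancel] at this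
      exact this
  mul' := by
    intro a b c d h1 h2
    show LenGe n (k + 2) (a * c - b * d)
    have h1' : LenGe n (k + 2) (a - b) := h1
    have h2' : LenGe n (k + 2) (c - d) := h2
    have e : a * c - b * d = a * (c - d) + (a - b) * d := by noncomm_ring
    rw [e]
    exact (((lenGe_zero a).mul h2').mono (by omega)).add ((h1'.mul (lenGe_zero d)).mono (by omega))
  add' := by
    intro a b c d h1 h2
    show LenGe n (k + 2) (a + c - (b + d))
    have h1' : LenGe n (k + 2) (a - b) := h1
    have h2' : LenGe n (k + 2) (c - d) := h2
    have e : a + c - (b + d) = (a - b) + (c - d) := by abel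
    rw [e]
    exact h1'.add h2'

abbrev RA := (rc n k).Quotient

noncomputable abbrev mkR : PA n →+* RA n k := (rc n k).mk'

lemma mkR_surjective : Function.Surjective (mkR n k) := fun z => Quotient.exists_rep z

lemma mkR_eq_zero {p : PA n} (h : LenGe n (k + 2) p) : mkR n k p = 0 := by
  have hr : (rc n k) p 0 := by
    show LenGe n (k + 2) (p - 0)
    rw [sub_zero]
    exact h
  have : mkR n k p = mkR n k 0 := (RingCon.eq _).mpr hr
  simpa using this

variable {n k}

/-- `JR m z`: `z` is represented by an element of degree ≥ m -/
def JR (m : ℕ) (z : RA n k) : Prop := ∃ p, LenGe n m p ∧ mkR n k p = z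

lemma JR.zero (m : ℕ) : JR m (0 : RA n k) := ⟨0, lenGe_zero_poly m, map_zero _⟩

lemma JR.mono {a b : ℕ} {z : RA n k} (h : JR a z) (hba : b ≤ a) : JR b z := by
  obtain ⟨p, hp, rfl⟩ := h
  exact ⟨p, hp.mono hba, rfl⟩

lemma JR.add {m : ℕ} {z w : RA n k} (hz : JR m z) (hw : JR m w) : JR m (z + w) := by
  obtain ⟨p, hp, rfl⟩ := hz; obtain ⟨q, hq, rfl⟩ := hw
  exact ⟨p + q, hp.add hq, map_add _ _ _⟩

lemma JR.neg {m : ℕ} {z : RA n k} (hz : JR m z) : JR m (-z) := by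
  obtain ⟨p, hp, rfl⟩ := hz
  exact ⟨-p, hp.neg, map_neg _ _⟩

lemma JR.mul {a b : ℕ} {z w : RA n k} (hz : JR a z) (hw : JR b w) : JR (a + b) (z * w) := by
  obtain ⟨p, hp, rfl⟩ := hz; obtain ⟨q, hq, rfl⟩ := hw
  exact ⟨p * q, hp.mul hq, map_mul _ _ _⟩

lemma JR.of_mk (q : PA n) : JR 0 (mkR n k q) := ⟨q, lenGe_zero q, rfl⟩

lemma JR.mul_any {a : ℕ} {z : RA n k} (hz : JR a z) (w : RA n k) : JR a (z * w) := by
  obtain ⟨q, rfl⟩ := mkR_surjective n k w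
  have := hz.mul (JR.of_mk q)
  simpa using this

lemma JR.any_mul {a : ℕ} {z : RA n k} (hz : JR a z) (w : RA n k) : JR a (w * z) := by
  obtain ⟨q, rfl⟩ := mkR_surjective n k w
  have := (JR.of_mk q).mul hz
  simpa using this

lemma JR.sub {m : ℕ} {z w : RA n k} (hz : JR m z) (hw : JR m w) : JR m (z - w) := by
  rw [sub_eq_add_neg]; exact hz.add hw.neg

lemma sub_one_expand {A : Type*} [Ring A] (a b : A) :
    (a - 1) * (b - 1) = a * b - a - b + 1 := by
  rw [sub_mul, mul_sub, mul_sub, one_mul, one_mul, mul_one]; abel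

lemma mul_expand_one {A : Type*} [Ring A] (X W : A) : X * W = X + X * (W - 1) := by
  rw [mul_sub, mul_one]; abel

lemma JR.eq_zero {z : RA n k} (h : JR (k + 2) z) : z = 0 := by
  obtain ⟨p, hp, rfl⟩ := h
  exact mkR_eq_zero n k hp


section Filt

variable {n k : ℕ}

/-- all words in the support have length exactly m -/
def LenEq (m : ℕ) (p : PA n) : Prop := ∀ w ∈ p.coeff.support, w.length = m

/-- the degree-m homogeneous part -/
noncomputable def filt (m : ℕ) (p : PA n) : PA n :=
  MonoidAlgebra.ofCoeff (Finsupp.filter (fun w => w.length = m) p.coeff)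

lemma filt_apply (m : ℕ) (p : PA n) (w : FreeMonoid (Fin n)) :
    filt m p w = if w.length = m then p w else 0 := Finsupp.filter_apply _ _ _

lemma filt_add (m : ℕ) (p q : PA n) : filt m (p + q) = filt m p + filt m q :=
  congrArg MonoidAlgebra.ofCoeff Finsupp.filter_add

lemma filt_zero (m : ℕ) : filt m (0 : PA n) = 0 := by
  ext w; simp [filt_apply]

lemma filt_neg (m : ℕ) (p : PA n) : filt m (-p) = -(filt m p) := by
  ext w
  rw [MonoidAlgebra.coeff_neg, Finsupp.neg_apply, filt_apply, filt_apply, MonoidAlgebra.coeff_neg,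
    Finsupp.neg_apply]
  split <;> simp

lemma filt_sub (m : ℕ) (p q : PA n) : filt m (p - q) = filt m p - filt m q := by
  rw [sub_eq_add_neg, sub_eq_add_neg, filt_add, filt_neg]

lemma filt_smul (m : ℕ) (c : ℚ) (p : PA n) : filt m (c • p) = c • filt m p := by
  ext w
  rw [MonoidAlgebra.coeff_smul, Finsupp.smul_apply, filt_apply, filt_apply,
    MonoidAlgebra.coeff_smul, Finsupp.smul_apply]
  split <;> simp

lemma filt_lenEq (m : ℕ) (p : PA n) : LenEq m (filt m p) := by
  intro w hw
  have := Finsupp.mem_support_iff.mp hw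
  rw [filt_apply] at this
  by_contra hne
  simp [hne] at this

lemma LenEq.lenGe {m : ℕ} {p : PA n} (h : LenEq m p) : LenGe n m p :=
  fun w hw => le_of_eq (h w hw).symm

lemma lenEq_zero_poly (m : ℕ) : LenEq m (0 : PA n) := by
  intro w hw
  simp at hw

lemma LenEq.smul {m : ℕ} {p : PA n} (c : ℚ) (hp : LenEq m p) : LenEq m (c • p) := by
  intro w hw
  exact hp w (Finsupp.support_smul hw)

lemma LenEq.add {m : ℕ} {p q : PA n} (hp : LenEq m p) (hq : LenEq m q) : LenEq m (p + q) := by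
  intro w hw
  rcases Finset.mem_union.mp (Finsupp.support_add hw) with h | h
  · exact hp w h
  · exact hq w h

lemma LenEq.mul {a b : ℕ} {p q : PA n} (hp : LenEq a p) (hq : LenEq b q) :
    LenEq (a + b) (p * q) := by
  intro w hw
  rcases Finset.mem_mul.mp (MonoidAlgebra.support_coeff_mul_subset p q hw) with ⟨u, hu, v, hv, huv⟩
  subst huv
  rw [FreeMonoid.length_mul, hp u hu, hq v hv]

lemma filt_eq_self_of_lenEq {m : ℕ} {p : PA n} (h : LenEq m p) : filt m p = p := by
  ext w
  rw [filt_apply]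
  split
  · rfl
  · rename_i hw
    by_contra hne
    exact hw (h w (Finsupp.mem_support_iff.mpr fun h0 => hne h0.symm))

lemma filt_eq_zero_of_lenGe {a m : ℕ} {p : PA n} (h : LenGe n a p) (hm : m < a) :
    filt m p = 0 := by
  ext w
  rw [filt_apply]
  split
  · rename_i hw
    by_contra hne
    have := h w (Finsupp.mem_support_iff.mpr hne)
    omega
  · rfl

lemma lenGe_sub_filt {m : ℕ} {p : PA n} (h : LenGe n m p) :
    LenGe n (m + 1) (p - filt m p) := by
  intro w hw
  have hne : (p - filt m p) w ≠ 0 := Finsupp.mem_support_iff.mp hw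
  rw [MonoidAlgebra.coeff_sub, Finsupp.sub_apply, filt_apply] at hne
  by_cases hl : w.length = m
  · simp [hl] at hne
  · have : p w ≠ 0 := by
      intro h0; rw [h0] at hne; simp at hne
    have := h w (Finsupp.mem_support_iff.mpr this)
    omega

lemma filt_mul {a b : ℕ} {p q : PA n} (hp : LenGe n a p) (hq : LenGe n b q) :
    filt (a + b) (p * q) = filt a p * filt b q := by
  have e : p * q = filt a p * filt b q + (filt a p * (q - filt b q) + (p - filt a p) * q) := by
    noncomm_ring
  rw [e, filt_add, filt_add]
  rw [filt_eq_self_of_lenEq ((filt_lenEq a p).mul (filt_lenEq b q))]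
  have h2 : filt (a + b) (filt a p * (q - filt b q)) = 0 :=
    filt_eq_zero_of_lenGe ((filt_lenEq a p).lenGe.mul (lenGe_sub_filt hq)) (by omega)
  have h3 : filt (a + b) ((p - filt a p) * q) = 0 :=
    filt_eq_zero_of_lenGe ((lenGe_sub_filt hp).mul hq) (by omega)
  rw [h2, h3]
  abel

end Filt

section Units

variable (n k : ℕ)

/-- the generator `X i` of the truncated free algebra -/
noncomputable def Xs (i : Fin n) : PA n := MonoidAlgebra.single (FreeMonoid.of i) 1

lemma lenEq_Xs (i : Fin n) : LenEq 1 (Xs n i) := by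
  intro w hw
  have := Finsupp.support_single_subset hw
  simp only [Finset.mem_singleton] at this
  subst this
  rfl

lemma lenGe_Xs (i : Fin n) : LenGe n 1 (Xs n i) := (lenEq_Xs n i).lenGe

lemma geom_aux {A : Type*} [Ring A] (x : A) (m : ℕ) :
    (1 + x) * (∑ j ∈ Finset.range m, (-x) ^ j) = 1 - (-x) ^ m ∧
    (∑ j ∈ Finset.range m, (-x) ^ j) * (1 + x) = 1 - (-x) ^ m := by
  induction m with
  | zero => simp
  | succ t ih =>
      have hc : x * (-x) ^ t = (-x) ^ t * x := ((Commute.refl x).neg_right.pow_right t).eq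
      constructor
      · rw [Finset.sum_range_succ, mul_add, ih.1, add_mul, one_mul, pow_succ, mul_neg, hc]
        abel
      · rw [Finset.sum_range_succ, add_mul, ih.2, mul_add, mul_one, pow_succ, mul_neg]
        abel

lemma mk_neg_pow_top (i : Fin n) : mkR n k ((-(Xs n i)) ^ (k + 2)) = 0 :=
  mkR_eq_zero n k (((lenGe_Xs n i).neg).pow (k + 2))

/-- the unit 1 + X i of the truncated algebra -/
noncomputable def xunit (i : Fin n) : (RA n k)ˣ where
  val := mkR n k (1 + Xs n i)
  inv := mkR n k (∑ j ∈ Finset.range (k + 2), (-(Xs n i)) ^ j)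
  val_inv := by
    rw [← map_mul, (geom_aux (Xs n i) (k + 2)).1, map_sub, mk_neg_pow_top, sub_zero, map_one]
  inv_val := by
    rw [← map_mul, (geom_aux (Xs n i) (k + 2)).2, map_sub, mk_neg_pow_top, sub_zero, map_one]

/-- the truncated Magnus embedding -/
noncomputable def mu : FG n →* (RA n k)ˣ := FreeGroup.lift (xunit n k)

lemma mu_of (i : Fin n) : mu n k (FreeGroup.of i) = xunit n k i := FreeGroup.lift_apply_of

lemma xunit_sub_one (i : Fin n) : ((xunit n k i : RA n k)) - 1 = mkR n k (Xs n i) := by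
  show mkR n k (1 + Xs n i) - 1 = mkR n k (Xs n i)
  rw [map_add, map_one]
  abel

variable {n k}

/-- subgroup of units congruent to 1 up to degree m -/
noncomputable def UJ (m : ℕ) : Subgroup (RA n k)ˣ where
  carrier := {u | JR m ((u : RA n k) - 1)}
  one_mem' := by
    show JR m (((1 : (RA n k)ˣ) : RA n k) - 1)
    rw [Units.val_one, sub_self]
    exact JR.zero m
  mul_mem' := by
    intro u v hu hv
    show JR m ((↑(u * v) : RA n k) - 1)
    have e2 : ((u : RA n k) - 1) * ((v : RA n k) - 1)
        = (u : RA n k) * (v : RA n k) - (u : RA n k) - (v : RA n k) + 1 := by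
      rw [sub_mul, mul_sub, mul_sub, one_mul, one_mul, mul_one]; abel
    have e : (↑(u * v) : RA n k) - 1
        = ((u : RA n k) - 1) * ((v : RA n k) - 1) + (((u : RA n k) - 1) + ((v : RA n k) - 1)) := by
      rw [Units.val_mul, e2]; abel
    rw [e]
    exact ((hu.mul hv).mono (by omega)).add (hu.add hv)
  inv_mem' := by
    intro u hu
    show JR m ((↑(u⁻¹) : RA n k) - 1)
    have e : (↑(u⁻¹) : RA n k) - 1 = -((((u : RA n k) - 1)) * (↑(u⁻¹) : RA n k)) := by
      rw [sub_mul, one_mul, Units.mul_inv]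
      abel
    rw [e]
    exact (hu.mul_any _).neg

lemma mem_UJ {m : ℕ} (u : (RA n k)ˣ) : u ∈ UJ m ↔ JR m ((u : RA n k) - 1) := Iff.rfl

lemma xunit_mem_UJ1 (i : Fin n) : xunit n k i ∈ UJ 1 := by
  rw [mem_UJ, xunit_sub_one]
  exact ⟨Xs n i, lenGe_Xs n i, rfl⟩

/-- value of a commutator of units -/
lemma commutator_val (u v : (RA n k)ˣ) :
    (↑(u * v * u⁻¹ * v⁻¹) : RA n k) - 1
      = (((u : RA n k) - 1) * ((v : RA n k) - 1) - ((v : RA n k) - 1) * ((u : RA n k) - 1))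
        * (↑(u⁻¹) : RA n k) * (↑(v⁻¹) : RA n k) := by
  have h2 : (v : RA n k) * (u : RA n k) * (↑(u⁻¹) : RA n k) * (↑(v⁻¹) : RA n k) = 1 := by
    rw [mul_assoc (v : RA n k) (u : RA n k), Units.mul_inv, mul_one, Units.mul_inv]
  have e2 : ((u : RA n k) - 1) * ((v : RA n k) - 1)
      = (u : RA n k) * (v : RA n k) - (u : RA n k) - (v : RA n k) + 1 := sub_one_expand _ _
  have e3 : ((v : RA n k) - 1) * ((u : RA n k) - 1)
      = (v : RA n k) * (u : RA n k) - (v : RA n k) - (u : RA n k) + 1 := sub_one_expand _ _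
  have h1 : ((u : RA n k) - 1) * ((v : RA n k) - 1) - ((v : RA n k) - 1) * ((u : RA n k) - 1)
      = (u : RA n k) * (v : RA n k) - (v : RA n k) * (u : RA n k) := by
    rw [e2, e3]; abel
  rw [h1, Units.val_mul, Units.val_mul, Units.val_mul, sub_mul, sub_mul, h2]

/-- the commutator key lemma -/
lemma commutator_units {m : ℕ} {u v : (RA n k)ˣ} (hu : u ∈ UJ (m + 1)) (hv : v ∈ UJ 1) :
    u * v * u⁻¹ * v⁻¹ ∈ UJ (m + 2) := by
  rw [mem_UJ, commutator_val]
  have hu' : JR (m + 1) ((u : RA n k) - 1) := hu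
  have hv' : JR 1 ((v : RA n k) - 1) := hv
  exact (((hu'.mul hv').mono (by omega)).sub ((hv'.mul hu').mono (by omega))).mul_any _
    |>.mul_any _

lemma unit_lcs_base (ν : FG n →* (RA n k)ˣ) (h1 : ∀ i, ν (FreeGroup.of i) ∈ UJ 1) :
    ∀ g, ν g ∈ UJ 1 := by
  intro g
  have htop : (⊤ : Subgroup (FG n)) ≤ (UJ 1).comap ν := by
    rw [← FreeGroup.closure_range_of, Subgroup.closure_le]
    rintro x ⟨i, rfl⟩
    exact h1 i
  exact htop (Subgroup.mem_top g)

lemma unit_lcs (ν : FG n →* (RA n k)ˣ) (h1 : ∀ i, ν (FreeGroup.of i) ∈ UJ 1) :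
    ∀ m, ∀ g ∈ (⊤ : Subgroup (FG n)).lowerCentralSeries m, ν g ∈ UJ (m + 1) := by
  intro m
  induction m with
  | zero =>
      intro g _
      exact unit_lcs_base ν h1 g
  | succ m ih =>
      intro g hg
      rw [Subgroup.lowerCentralSeries_succ] at hg
      have hle : Subgroup.closure
          {x | ∃ p ∈ (⊤ : Subgroup (FG n)).lowerCentralSeries m, ∃ q ∈ (⊤ : Subgroup (FG n)),
            p * q * p⁻¹ * q⁻¹ = x} ≤ (UJ (m + 2)).comap ν := by
        rw [Subgroup.closure_le]
        rintro x ⟨p, hp, q, -, rfl⟩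
        show ν (p * q * p⁻¹ * q⁻¹) ∈ UJ (m + 2)
        rw [map_mul, map_mul, map_mul, map_inv, map_inv]
        exact commutator_units (ih p hp) (unit_lcs_base ν h1 q)
      exact hle hg

end Units

section Theta

variable {n k : ℕ}

/-- the Johnson--Magnus invariant -/
noncomputable def theta (φ : MulAut (FG n)) (g : FG n) : RA n k :=
  ((mu n k (φ g * g⁻¹) : (RA n k)ˣ) : RA n k) - 1

lemma IAF_mem_iff (φ : MulAut (FG n)) :
    φ ∈ IAF n k ↔ ∀ x : FG n, φ x * x⁻¹ ∈ (⊤ : Subgroup (FG n)).lowerCentralSeries k := Iff.rfl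

lemma mu_mem_UJ1 (g : FG n) : mu n k g ∈ UJ 1 :=
  unit_lcs_base (mu n k) (fun i => by rw [mu_of]; exact xunit_mem_UJ1 i) g

lemma mu_lcs {m : ℕ} {g : FG n} (hg : g ∈ (⊤ : Subgroup (FG n)).lowerCentralSeries m) :
    mu n k g ∈ UJ (m + 1) :=
  unit_lcs (mu n k) (fun i => by rw [mu_of]; exact xunit_mem_UJ1 i) m g hg

lemma theta_JR {φ : MulAut (FG n)} (hφ : φ ∈ IAF n k) (g : FG n) :
    JR (k + 1) (theta (k := k) φ g) :=
  mu_lcs (hφ g)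

lemma mu_val_eq_of_lcs_top {g : FG n} (hg : g ∈ (⊤ : Subgroup (FG n)).lowerCentralSeries (k + 1)) :
    ((mu n k g : (RA n k)ˣ) : RA n k) = 1 := by
  have h := mu_lcs (k := k) hg
  rw [mem_UJ] at h
  have h0 : ((mu n k g : (RA n k)ˣ) : RA n k) - 1 = 0 := (h.mono (by omega)).eq_zero
  have := sub_eq_zero.mp h0
  simpa using this

/-- conjugation acts trivially on the top graded piece -/
lemma conj_val_eq {B W : (RA n k)ˣ} (hB : JR (k + 1) ((B : RA n k) - 1))
    (hW : JR 1 ((W : RA n k) - 1)) :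
    ((W * B * W⁻¹ : (RA n k)ˣ) : RA n k) = (B : RA n k) := by
  set w : RA n k := (W : RA n k) with hw
  set b : RA n k := (B : RA n k) with hb
  set iw : RA n k := ((W⁻¹ : (RA n k)ˣ) : RA n k) with hiw
  have hIW : JR 1 (iw - 1) := by
    have : W⁻¹ ∈ UJ 1 := (UJ 1).inv_mem (by rw [mem_UJ]; exact hW)
    exact this
  have hwiw : w * iw = 1 := by rw [hw, hiw, Units.mul_inv]
  have e0 : ((W * B * W⁻¹ : (RA n k)ˣ) : RA n k) = w * b * iw := by
    rw [Units.val_mul, Units.val_mul]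
  have e1 : w * b * iw = 1 + ((b - 1) + ((w - 1) * (b - 1) * iw + (b - 1) * (iw - 1))) := by
    have ha1 : (w - 1) * (b - 1) * iw = w * b * iw - w * iw - b * iw + iw := by
      rw [sub_one_expand, add_mul, sub_mul, sub_mul, one_mul]
    have ha2 : (b - 1) * (iw - 1) = b * iw - b - iw + 1 := sub_one_expand b iw
    rw [ha1, ha2, hwiw]
    abel
  have hz1 : (w - 1) * (b - 1) * iw = 0 := by
    refine JR.eq_zero ?_
    exact ((hW.mul hB).mono (by omega)).mul_any _
  have hz2 : (b - 1) * (iw - 1) = 0 := by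
    refine JR.eq_zero ?_
    exact (hB.mul hIW).mono (by omega)
  rw [e0, e1, hz1, hz2]
  abel

lemma theta_mul_g {φ : MulAut (FG n)} (hφ : φ ∈ IAF n k) (g h : FG n) :
    theta (k := k) φ (g * h) = theta (k := k) φ g + theta (k := k) φ h := by
  have hgrp : φ (g * h) * (g * h)⁻¹ = (φ g * g⁻¹) * (g * (φ h * h⁻¹) * g⁻¹) := by
    rw [map_mul]; group
  unfold theta
  rw [hgrp, map_mul]
  rw [Units.val_mul]
  have hconj : ((mu n k (g * (φ h * h⁻¹) * g⁻¹) : (RA n k)ˣ) : RA n k)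
      = ((mu n k (φ h * h⁻¹) : (RA n k)ˣ) : RA n k) := by
    rw [map_mul, map_mul, map_inv]
    exact conj_val_eq (theta_JR hφ h) (mu_mem_UJ1 g)
  rw [hconj]
  set a : RA n k := ((mu n k (φ g * g⁻¹) : (RA n k)ˣ) : RA n k) with ha
  set b : RA n k := ((mu n k (φ h * h⁻¹) : (RA n k)ˣ) : RA n k) with hb
  have hz : (a - 1) * (b - 1) = 0 :=
    JR.eq_zero (((theta_JR hφ g).mul (theta_JR hφ h)).mono (by omega))
  have expand : a * b - 1 = (a - 1) * (b - 1) + ((a - 1) + (b - 1)) := by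
    rw [sub_one_expand]; abel
  rw [expand, hz]
  abel

lemma theta_one (g : FG n) : theta (n := n) (k := k) 1 g = 0 := by
  unfold theta
  have : ((1 : MulAut (FG n)) g) * g⁻¹ = 1 := by simp
  rw [this, map_one, Units.val_one, sub_self]

section Claim1

lemma comm_central_left {Q : Type*} [Group Q] {U : Q} (hU : ∀ z, Commute U z) (P Y : Q) :
    ⁅U * P, Y⁆ = ⁅P, Y⁆ := by
  rw [commutatorElement_def, commutatorElement_def]
  have e1 : U * P * Y * (U * P)⁻¹ * Y⁻¹ = U * (P * Y * P⁻¹) * U⁻¹ * Y⁻¹ := by group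
  have e2 : U * (P * Y * P⁻¹) * U⁻¹ = P * Y * P⁻¹ := by
    rw [(hU (P * Y * P⁻¹)).eq, mul_assoc, mul_inv_cancel, mul_one]
  rw [e1, e2]

lemma comm_central_right {Q : Type*} [Group Q] {V : Q} (hV : ∀ z, Commute V z) (P Y : Q) :
    ⁅P, V * Y⁆ = ⁅P, Y⁆ := by
  rw [commutatorElement_def, commutatorElement_def]
  have e1 : P * (V * Y) * P⁻¹ * (V * Y)⁻¹ = (P * V) * (Y * P⁻¹ * Y⁻¹) * V⁻¹ := by group
  rw [e1, ← (hV P).eq]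
  have e2 : V * P * (Y * P⁻¹ * Y⁻¹) * V⁻¹ = V * (P * Y * P⁻¹ * Y⁻¹) * V⁻¹ := by group
  rw [e2, (hV (P * Y * P⁻¹ * Y⁻¹)).eq, mul_assoc, mul_inv_cancel, mul_one]

/-- elements of `IA_n(k)` shift the lower central series by one step -/
lemma claim1 (hk : 1 ≤ k) {φ : MulAut (FG n)} (hφ : φ ∈ IAF n k) :
    ∀ j, j ≤ k → ∀ g ∈ (⊤ : Subgroup (FG n)).lowerCentralSeries j,
      φ g * g⁻¹ ∈ (⊤ : Subgroup (FG n)).lowerCentralSeries (j + 1) := by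
  intro j
  induction j with
  | zero =>
      intro _ g _
      exact Subgroup.lowerCentralSeries_antitone _ hk (hφ g)
  | succ j ih =>
      intro hjk g hg
      set N := (⊤ : Subgroup (FG n)).lowerCentralSeries (j + 2) with hN
      have hNn : N.Normal := inferInstance
      set mkQ := QuotientGroup.mk' N with hmkQ
      -- centrality of `lcs (j+1)` in the quotient
      have hcen : ∀ c ∈ (⊤ : Subgroup (FG n)).lowerCentralSeries (j + 1), ∀ z, Commute (mkQ c) z := by
        intro c hc z
        obtain ⟨y, rfl⟩ := QuotientGroup.mk'_surjective N z
        have hmem : ⁅c, y⁆ ∈ N := by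
          rw [hN, Subgroup.lowerCentralSeries_succ]
          exact Subgroup.subset_closure ⟨c, hc, y, Subgroup.mem_top y, rfl⟩
        have h1 : mkQ ⁅c, y⁆ = 1 := (QuotientGroup.eq_one_iff _).mpr hmem
        rw [map_commutatorElement] at h1
        exact commutatorElement_eq_one_iff_commute.mp h1
      -- the two homomorphisms agree on lcs (j+1)
      have key : (⊤ : Subgroup (FG n)).lowerCentralSeries (j + 1)
          ≤ MonoidHom.eqLocus (mkQ.comp (MulEquiv.toMonoidHom φ)) mkQ := by
        rw [Subgroup.lowerCentralSeries_succ, Subgroup.commutator_def, Subgroup.closure_le]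
        rintro x ⟨p, hp, q, -, rfl⟩
        show mkQ (φ (p * q * p⁻¹ * q⁻¹)) = mkQ (p * q * p⁻¹ * q⁻¹)
        have hcomm : p * q * p⁻¹ * q⁻¹ = ⁅p, q⁆ := (commutatorElement_def p q).symm
        rw [hcomm, map_commutatorElement, map_commutatorElement]
        have hu : φ p * p⁻¹ ∈ (⊤ : Subgroup (FG n)).lowerCentralSeries (j + 1) := ih (by omega) p hp
        have hv : φ q * q⁻¹ ∈ (⊤ : Subgroup (FG n)).lowerCentralSeries (j + 1) :=
          Subgroup.lowerCentralSeries_antitone _ hjk (hφ q)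
        have hP : mkQ (φ p) = mkQ (φ p * p⁻¹) * mkQ p := by
          rw [← map_mul]
          congr 1
          group
        have hQ : mkQ (φ q) = mkQ (φ q * q⁻¹) * mkQ q := by
          rw [← map_mul]
          congr 1
          group
        rw [hP, hQ]
        rw [comm_central_left (hcen _ hu), comm_central_right (hcen _ hv)]
        exact (map_commutatorElement _ _ _).symm
      have hx : mkQ (φ g) = mkQ g := key hg
      have hone : mkQ (φ g * g⁻¹) = 1 := by
        rw [map_mul, map_inv, hx, mul_inv_cancel]
      exact (QuotientGroup.eq_one_iff _).mp hone

lemma theta_mul_phi (hk : 1 ≤ k) {φ ψ : MulAut (FG n)} (hφ : φ ∈ IAF n k) (hψ : ψ ∈ IAF n k)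
    (g : FG n) :
    theta (k := k) (φ * ψ) g = theta (k := k) φ g + theta (k := k) ψ g := by
  have happ : (φ * ψ) g = φ (ψ g) := rfl
  have hgrp : φ (ψ g) * g⁻¹ = φ (ψ g * g⁻¹) * (φ g * g⁻¹) := by
    rw [map_mul, map_inv]; group
  set u : FG n := ψ g * g⁻¹ with hu
  have huk : u ∈ (⊤ : Subgroup (FG n)).lowerCentralSeries k := hψ g
  have hphiu : φ u * u⁻¹ ∈ (⊤ : Subgroup (FG n)).lowerCentralSeries (k + 1) := claim1 hk hφ k le_rfl u huk
  have hmu : ((mu n k (φ u) : (RA n k)ˣ) : RA n k) = ((mu n k u : (RA n k)ˣ) : RA n k) := by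
    have e : φ u = (φ u * u⁻¹) * u := by group
    rw [e, map_mul, Units.val_mul, mu_val_eq_of_lcs_top hphiu, one_mul]
  unfold theta
  rw [happ, hgrp, map_mul, Units.val_mul, hmu]
  set a : RA n k := ((mu n k u : (RA n k)ˣ) : RA n k) with ha
  set b : RA n k := ((mu n k (φ g * g⁻¹) : (RA n k)ˣ) : RA n k) with hb
  have hJa : JR (k + 1) (a - 1) := mu_lcs huk
  have hJb : JR (k + 1) (b - 1) := theta_JR hφ g
  have hz : (a - 1) * (b - 1) = 0 := JR.eq_zero ((hJa.mul hJb).mono (by omega))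
  have expand : a * b - 1 = (a - 1) * (b - 1) + ((a - 1) + (b - 1)) := by
    rw [sub_one_expand]; abel
  rw [expand, hz]
  abel

lemma theta_inv_phi (hk : 1 ≤ k) {φ : MulAut (FG n)} (hφ : φ ∈ IAF n k) (g : FG n) :
    theta (k := k) φ⁻¹ g = - theta (k := k) φ g := by
  have h1 := theta_mul_phi hk hφ ((IAF n k).inv_mem hφ) g
  rw [mul_inv_cancel, theta_one] at h1
  exact eq_neg_of_add_eq_zero_right h1.symm

end Claim1

end Theta

section MainAlg

variable {n k : ℕ}

variable (VP : Submodule ℚ (PA n))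

/-- allowed homogeneous top parts: iterated left-normed brackets of degree-one pieces -/
noncomputable def Lv : ℕ → Submodule ℚ (PA n)
  | 0 => VP
  | (m + 1) => Submodule.span ℚ {x | ∃ a ∈ Lv m, ∃ b ∈ VP, x = a * b - b * a}

/-- the main invariant: a representative of degree ≥ m+1 whose top part is allowed -/
def InvP (m : ℕ) (z : RA n k) : Prop :=
  ∃ p, mkR n k p = z ∧ LenGe n (m + 1) p ∧ filt (m + 1) p ∈ Lv VP m

lemma InvP.toJR {m : ℕ} {z : RA n k} (h : InvP VP m z) : JR (m + 1) z := by
  obtain ⟨p, hp, hge, -⟩ := h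
  exact ⟨p, hge, hp⟩

/-- subgroup of units with allowed tops -/
noncomputable def UU (m : ℕ) : Subgroup (RA n k)ˣ where
  carrier := {u | InvP VP m ((u : RA n k) - 1)}
  one_mem' := by
    refine ⟨0, ?_, lenGe_zero_poly _, ?_⟩
    · rw [map_zero, Units.val_one, sub_self]
    · rw [filt_zero]; exact Submodule.zero_mem _
  mul_mem' := by
    rintro u v ⟨p, hp, hpge, hptop⟩ ⟨q, hq, hqge, hqtop⟩
    refine ⟨p * q + (p + q), ?_, ?_, ?_⟩
    · rw [map_add, map_add, map_mul, hp, hq]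
      have e2 : ((u : RA n k) - 1) * ((v : RA n k) - 1)
          = (u : RA n k) * (v : RA n k) - (u : RA n k) - (v : RA n k) + 1 := sub_one_expand _ _
      rw [e2, Units.val_mul]; abel
    · exact ((hpge.mul hqge).mono (by omega)).add (hpge.add hqge)
    · rw [filt_add, filt_add]
      rw [filt_eq_zero_of_lenGe (hpge.mul hqge) (by omega)]
      rw [zero_add]
      exact Submodule.add_mem _ hptop hqtop
  inv_mem' := by
    rintro u ⟨p, hp, hpge, hptop⟩
    have huJ : u ∈ UJ (m + 1) := ⟨p, hpge, hp⟩
    have hinvJ : u⁻¹ ∈ UJ (m + 1) := (UJ (m + 1)).inv_mem huJ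
    obtain ⟨q, hqge, hq⟩ := (hinvJ : JR (m + 1) ((↑(u⁻¹) : RA n k) - 1))
    refine ⟨-p - p * q, ?_, ?_, ?_⟩
    · rw [map_sub, map_neg, map_mul, hp, hq]
      have : (↑(u⁻¹) : RA n k) - 1
          = -((u : RA n k) - 1) - ((u : RA n k) - 1) * ((↑(u⁻¹) : RA n k) - 1) := by
        have e : -((u : RA n k) - 1) - ((u : RA n k) - 1) * ((↑(u⁻¹) : RA n k) - 1)
            = -(((u : RA n k) - 1) * (↑(u⁻¹) : RA n k)) := by
          rw [mul_sub, mul_one]; abel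
        rw [e, sub_mul, one_mul, Units.mul_inv]
        abel
      exact this.symm
    · have h1 : LenGe n (m + 1) (p * q) := (hpge.mul hqge).mono (by omega)
      exact hpge.neg.sub h1
    · rw [filt_sub, filt_neg]
      rw [filt_eq_zero_of_lenGe ((hpge.mul hqge).mono (by omega) : LenGe n (m + 2) (p * q))
        (by omega)]
      exact Submodule.sub_mem _ (Submodule.neg_mem _ hptop) (Submodule.zero_mem _)

lemma mem_UU {m : ℕ} (u : (RA n k)ˣ) : u ∈ UU VP m ↔ InvP VP m ((u : RA n k) - 1) := Iff.rfl

lemma main_alg (ν : FG n →* (RA n k)ˣ)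
    (hgen : ∀ i, InvP VP 0 ((ν (FreeGroup.of i) : RA n k) - 1)) :
    ∀ m, ∀ g ∈ (⊤ : Subgroup (FG n)).lowerCentralSeries m, InvP VP m ((ν g : RA n k) - 1) := by
  have hbase : ∀ g, ν g ∈ UU VP 0 := by
    intro g
    have htop : (⊤ : Subgroup (FG n)) ≤ (UU VP 0).comap ν := by
      rw [← FreeGroup.closure_range_of, Subgroup.closure_le]
      rintro x ⟨i, rfl⟩
      exact hgen i
    exact htop (Subgroup.mem_top g)
  have hUJ1 : ∀ g, ν g ∈ UJ 1 := by
    intro g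
    exact (hbase g).toJR
  intro m
  induction m with
  | zero => exact fun g _ => hbase g
  | succ m ih =>
      intro g hg
      rw [Subgroup.lowerCentralSeries_succ] at hg
      have hle : Subgroup.closure
          {x | ∃ p ∈ (⊤ : Subgroup (FG n)).lowerCentralSeries m, ∃ q ∈ (⊤ : Subgroup (FG n)),
            p * q * p⁻¹ * q⁻¹ = x} ≤ (UU VP (m + 1)).comap ν := by
        rw [Subgroup.closure_le]
        rintro x ⟨g1, hg1, g2, -, rfl⟩
        show ν (g1 * g2 * g1⁻¹ * g2⁻¹) ∈ UU VP (m + 1)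
        rw [map_mul, map_mul, map_mul, map_inv, map_inv, mem_UU]
        obtain ⟨p, hp, hpge, hptop⟩ := ih g1 hg1
        obtain ⟨q, hq, hqge, hqtop⟩ := hbase g2
        have hqge1 : LenGe n 1 q := hqge
        have hw : (ν g1)⁻¹ * (ν g2)⁻¹ ∈ UJ 1 :=
          Subgroup.mul_mem _ ((UJ 1).inv_mem (hUJ1 g1)) ((UJ 1).inv_mem (hUJ1 g2))
        obtain ⟨s, hsge, hs⟩ := (hw : JR 1 ((↑((ν g1)⁻¹ * (ν g2)⁻¹) : RA n k) - 1))
        have h1 : LenGe n (m + 2) (p * q - q * p) := by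
          have ha : LenGe n (m + 2) (p * q) := by
            have := hpge.mul hqge1
            exact this
          have hb : LenGe n (m + 2) (q * p) := by
            have := hqge1.mul hpge
            exact this.mono (by omega)
          exact ha.sub hb
        refine ⟨(p * q - q * p) + (p * q - q * p) * s, ?_, ?_, ?_⟩
        · rw [map_add, map_mul, map_sub, map_mul, map_mul, hp, hq, hs, commutator_val]
          conv_rhs => rw [mul_assoc, ← Units.val_mul]
          conv_rhs => rw [mul_expand_one]
        · exact h1.add ((h1.mul hsge).mono (by omega))
        · rw [filt_add, filt_sub]
          rw [filt_eq_zero_of_lenGe (h1.mul hsge) (by omega)]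
          have hpq : filt (m + 2) (p * q) = filt (m + 1) p * filt 1 q := filt_mul hpge hqge1
          have hqp : filt (m + 2) (q * p) = filt 1 q * filt (m + 1) p := by
            have := filt_mul hqge1 hpge
            rwa [show 1 + (m + 1) = m + 2 by omega] at this
          rw [hpq, hqp, add_zero]
          apply Submodule.subset_span
          exact ⟨filt (m + 1) p, hptop, filt 1 q, hqtop, rfl⟩
      exact hle hg
end MainAlg

section Retraction

variable {n k : ℕ} {A B : Subgroup (FG n)}

noncomputable def fe (hfp : IsFreeProductPair A B) : Monoid.Coprod A B ≃* FG n :=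
  MulEquiv.ofBijective (Monoid.Coprod.lift A.subtype B.subtype) hfp

noncomputable def rho (hfp : IsFreeProductPair A B) : FG n →* FG n :=
  A.subtype.comp ((Monoid.Coprod.lift (MonoidHom.id A) (1 : B →* A)).comp
    (fe hfp).symm.toMonoidHom)

lemma rho_mem (hfp : IsFreeProductPair A B) (x : FG n) : rho hfp x ∈ A := by
  unfold rho
  simp only [MonoidHom.comp_apply]
  exact SetLike.coe_mem _

lemma rho_fix (hfp : IsFreeProductPair A B) {a : FG n} (ha : a ∈ A) : rho hfp a = a := by
  have h1 : (fe hfp) (Monoid.Coprod.inl ⟨a, ha⟩) = a := by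
    show Monoid.Coprod.lift A.subtype B.subtype (Monoid.Coprod.inl ⟨a, ha⟩) = a
    rw [Monoid.Coprod.lift_apply_inl]
    rfl
  have h2 : (fe hfp).symm a = Monoid.Coprod.inl ⟨a, ha⟩ := by
    rw [MulEquiv.symm_apply_eq]
    exact h1.symm
  unfold rho
  simp only [MonoidHom.comp_apply, MulEquiv.coe_toMonoidHom, h2, Monoid.Coprod.lift_apply_inl]
  rfl

lemma sup_eq_top (hfp : IsFreeProductPair A B) : A ⊔ B = ⊤ := by
  rw [eq_top_iff]
  intro x _
  obtain ⟨c, rfl⟩ := hfp.2 x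
  refine Monoid.Coprod.induction_on
    (motive := fun c => Monoid.Coprod.lift A.subtype B.subtype c ∈ A ⊔ B) c ?_ ?_ ?_
  · intro m
    rw [Monoid.Coprod.lift_apply_inl]
    exact Subgroup.mem_sup_left (SetLike.coe_mem m)
  · intro m
    rw [Monoid.Coprod.lift_apply_inr]
    exact Subgroup.mem_sup_right (SetLike.coe_mem m)
  · intro x y hx hy
    rw [map_mul]
    exact Subgroup.mul_mem _ hx hy

end Retraction

section Ellcan

variable {n k : ℕ}

lemma mu_JR1_ex (g : FG n) :
    ∃ p, LenGe n 1 p ∧ mkR n k p = ((mu n k g : (RA n k)ˣ) : RA n k) - 1 :=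
  mu_mem_UJ1 g

/-- canonical degree-one part of the Magnus expansion -/
noncomputable def ellcan (g : FG n) : PA n := filt 1 (Classical.choose (mu_JR1_ex (k := k) g))

lemma filt_congr_of_mk_eq {m : ℕ} {p q : PA n} (hm : m ≤ k + 1) (h : mkR n k p = mkR n k q) :
    filt m p = filt m q := by
  have hrel : (rc n k) p q := Quotient.exact h
  have hge : LenGe n (k + 2) (p - q) := hrel
  have h0 : filt m (p - q) = 0 := filt_eq_zero_of_lenGe hge (by omega)
  rw [filt_sub] at h0
  have := sub_eq_zero.mp h0
  exact this

lemma ellcan_rep {g : FG n} {p : PA n}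
    (hp : mkR n k p = ((mu n k g : (RA n k)ˣ) : RA n k) - 1) (hk1 : 1 ≤ k + 1) :
    filt 1 p = ellcan (k := k) g := by
  unfold ellcan
  exact filt_congr_of_mk_eq (by omega) (hp.trans (Classical.choose_spec (mu_JR1_ex g)).2.symm)

lemma ellcan_spec (g : FG n) :
    mkR n k (Classical.choose (mu_JR1_ex (k := k) g))
      = ((mu n k g : (RA n k)ˣ) : RA n k) - 1 ∧
    LenGe n 1 (Classical.choose (mu_JR1_ex (k := k) g)) := by
  exact ⟨(Classical.choose_spec (mu_JR1_ex g)).2, (Classical.choose_spec (mu_JR1_ex g)).1⟩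

lemma ellcan_mul (g h : FG n) :
    ellcan (k := k) (g * h) = ellcan (k := k) g + ellcan (k := k) h := by
  obtain ⟨hg, hgge⟩ := ellcan_spec (k := k) g
  obtain ⟨hh, hhge⟩ := ellcan_spec (k := k) h
  set p := Classical.choose (mu_JR1_ex (k := k) g)
  set q := Classical.choose (mu_JR1_ex (k := k) h)
  have hrep : mkR n k (p + q + p * q)
      = ((mu n k (g * h) : (RA n k)ˣ) : RA n k) - 1 := by
    rw [map_add, map_add, map_mul, hg, hh, map_mul, Units.val_mul]
    have e2 := sub_one_expand ((mu n k g : (RA n k)ˣ) : RA n k) ((mu n k h : (RA n k)ˣ) : RA n k)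
    rw [e2]; abel
  have := ellcan_rep hrep (by omega)
  rw [filt_add, filt_add, filt_eq_zero_of_lenGe (hgge.mul hhge) (by omega), add_zero] at this
  rw [← this]
  rfl

lemma ellcan_one : ellcan (n := n) (k := k) 1 = 0 := by
  have hrep : mkR n k 0 = ((mu n k (1 : FG n) : (RA n k)ˣ) : RA n k) - 1 := by
    rw [map_zero, map_one, Units.val_one, sub_self]
  have := ellcan_rep hrep (by omega)
  rw [filt_zero] at this
  exact this.symm

lemma ellcan_inv (g : FG n) : ellcan (k := k) g⁻¹ = -ellcan (k := k) g := by
  have h := ellcan_mul (k := k) g g⁻¹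
  rw [mul_inv_cancel, ellcan_one] at h
  exact eq_neg_of_add_eq_zero_right h.symm

end Ellcan

section Coeff

variable {n k : ℕ}

/-- the base letter -/
def z0 (hn : k < n) : Fin n := ⟨0, by omega⟩

/-- the determinant letters, in decreasing order -/
def dlet (hn : k < n) (j : Fin k) : Fin n := ⟨k - j.val, by omega⟩

/-- the magic word functional -/
noncomputable def cw (hn : k < n) (w : FreeMonoid (Fin n)) : ℚ :=
  if w.length = k + 1 ∧ w.toList.getLast? = some (z0 hn) then
    Matrix.det (Matrix.of fun i j : Fin k =>
      if w.toList.getD i.val (z0 hn) = dlet hn j then (1 : ℚ) else 0)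
  else 0

lemma cw_eq_zero_of_len {hn : k < n} {w : FreeMonoid (Fin n)} (h : w.length ≠ k + 1) :
    cw hn w = 0 := by
  unfold cw
  rw [if_neg]
  intro hcon
  exact h hcon.1

lemma cw_eq_zero_of_last {hn : k < n} {w : FreeMonoid (Fin n)}
    (h : w.toList.getLast? ≠ some (z0 hn)) : cw hn w = 0 := by
  unfold cw
  rw [if_neg]
  intro hcon
  exact h hcon.2

/-- the coefficient functional on polynomials -/
noncomputable def cP (hn : k < n) : PA n →ₗ[ℚ] ℚ :=
  (Finsupp.lsum ℚ (fun w => (cw hn w) • (LinearMap.id : ℚ →ₗ[ℚ] ℚ))).comp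
    (MonoidAlgebra.coeffLinearEquiv ℚ).toLinearMap

lemma cP_single (hn : k < n) (w : FreeMonoid (Fin n)) (c : ℚ) :
    cP hn (MonoidAlgebra.single w c) = cw hn w * c := by
  unfold cP
  rw [LinearMap.comp_apply]
  erw [Finsupp.lsum_single (S := ℚ)]
  simp

lemma cP_eq_zero_of_lenGe {hn : k < n} {p : PA n} (h : LenGe n (k + 2) p) : cP hn p = 0 := by
  unfold cP
  rw [LinearMap.comp_apply]
  erw [Finsupp.lsum_apply (S := ℚ)]
  apply Finset.sum_eq_zero
  intro w hw
  have hlen := h w hw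
  have : cw hn w = 0 := cw_eq_zero_of_len (by omega)
  simp [this]

lemma cP_filt {hn : k < n} {p : PA n} (h : LenGe n (k + 1) p) :
    cP hn p = cP hn (filt (k + 1) p) := by
  have hd : p = filt (k + 1) p + (p - filt (k + 1) p) := by abel
  conv_lhs => rw [hd]
  rw [map_add, cP_eq_zero_of_lenGe (lenGe_sub_filt h), add_zero]

/-- the coefficient functional on the truncated algebra -/
noncomputable def cR (hn : k < n) : RA n k → ℚ :=
  Quotient.lift (fun p => cP hn p) (by
    intro a b hab
    have hge : LenGe n (k + 2) (a - b) := hab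
    have h0 : cP hn (a - b) = 0 := cP_eq_zero_of_lenGe hge
    rw [map_sub] at h0
    have := sub_eq_zero.mp h0
    exact this)

lemma cR_mk (hn : k < n) (p : PA n) : cR hn (mkR n k p) = cP hn p := rfl

lemma cR_zero (hn : k < n) : cR hn (0 : RA n k) = 0 := by
  have : (0 : RA n k) = mkR n k 0 := (map_zero _).symm
  rw [this, cR_mk, map_zero]

lemma cR_add (hn : k < n) (x y : RA n k) : cR hn (x + y) = cR hn x + cR hn y := by
  obtain ⟨p, rfl⟩ := mkR_surjective n k x
  obtain ⟨q, rfl⟩ := mkR_surjective n k y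
  rw [← map_add, cR_mk, cR_mk, cR_mk, map_add]

lemma cR_neg (hn : k < n) (x : RA n k) : cR hn (-x) = -cR hn x := by
  obtain ⟨p, rfl⟩ := mkR_surjective n k x
  rw [← map_neg, cR_mk, cR_mk, map_neg]

end Coeff

section Vanish

variable {n k : ℕ}

/-- ordered products of elements of `VP` -/
def OrdP (VP : Submodule ℚ (PA n)) (m : ℕ) : Set (PA n) :=
  {x | ∃ q : Fin m → PA n, (∀ i, q i ∈ VP) ∧ x = (List.ofFn q).prod}

lemma prod_snoc_mem {VP : Submodule ℚ (PA n)} {m : ℕ} {q : Fin (m + 1) → PA n}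
    (hq : ∀ i, q i ∈ VP) {b : PA n} (hb : b ∈ VP) :
    (List.ofFn q).prod * b ∈ OrdP VP (m + 2) := by
  refine ⟨(Fin.snoc q b : Fin (m + 2) → PA n), ?_, ?_⟩
  · intro i
    refine Fin.lastCases ?_ ?_ i
    · rw [Fin.snoc_last]; exact hb
    · intro j; rw [Fin.snoc_castSucc]; exact hq j
  · have hfun : (fun i : Fin (m + 1) => (Fin.snoc q b : Fin (m + 2) → PA n) i.castSucc) = q := by
      funext i; simp
    rw [List.ofFn_succ' (Fin.snoc q b : Fin (m + 2) → PA n), List.prod_concat, Fin.snoc_last,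
      hfun]

lemma prod_cons_mem {VP : Submodule ℚ (PA n)} {m : ℕ} {q : Fin (m + 1) → PA n}
    (hq : ∀ i, q i ∈ VP) {b : PA n} (hb : b ∈ VP) :
    b * (List.ofFn q).prod ∈ OrdP VP (m + 2) := by
  refine ⟨(Fin.cons b q : Fin (m + 2) → PA n), ?_, ?_⟩
  · intro i
    refine Fin.cases ?_ ?_ i
    · rw [Fin.cons_zero]; exact hb
    · intro j; rw [Fin.cons_succ]; exact hq j
  · have hfun : (fun i : Fin (m + 1) => (Fin.cons b q : Fin (m + 2) → PA n) i.succ) = q := by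
      funext i; simp
    rw [List.ofFn_succ (f := (Fin.cons b q : Fin (m + 2) → PA n)), List.prod_cons, Fin.cons_zero, hfun]

lemma bracket_mem_ordSpan {VP : Submodule ℚ (PA n)} {m : ℕ} {b : PA n} (hb : b ∈ VP)
    {a : PA n} (ha : a ∈ Submodule.span ℚ (OrdP VP (m + 1))) :
    a * b - b * a ∈ Submodule.span ℚ (OrdP VP (m + 2)) := by
  induction ha using Submodule.span_induction with
  | mem x hx =>
      obtain ⟨q, hq, rfl⟩ := hx
      exact Submodule.sub_mem _ (Submodule.subset_span (prod_snoc_mem hq hb))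
        (Submodule.subset_span (prod_cons_mem hq hb))
  | zero => rw [zero_mul, mul_zero, sub_zero]; exact Submodule.zero_mem _
  | add x y hx hy ihx ihy =>
      have e : (x + y) * b - b * (x + y) = (x * b - b * x) + (y * b - b * y) := by
        noncomm_ring
      rw [e]; exact Submodule.add_mem _ ihx ihy
  | smul c x hx ihx =>
      have e : (c • x) * b - b * (c • x) = c • (x * b - b * x) := by
        rw [smul_mul_assoc, mul_smul_comm, ← smul_sub]
      rw [e]; exact Submodule.smul_mem _ c ihx

lemma Lv_le_ordSpan (VP : Submodule ℚ (PA n)) :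
    ∀ m, Lv VP m ≤ Submodule.span ℚ (OrdP VP (m + 1)) := by
  intro m
  induction m with
  | zero =>
      intro v hv
      apply Submodule.subset_span
      refine ⟨fun _ => v, fun _ => hv, ?_⟩
      simp
  | succ m ih =>
      show Lv VP (m + 1) ≤ _
      rw [Lv, Submodule.span_le]
      rintro x ⟨a, ha, b, hb, rfl⟩
      exact bracket_mem_ordSpan hb (ih ha)

lemma len_one_exists_of (w : FreeMonoid (Fin n)) (hw : w.length = 1) :
    ∃ b, w = FreeMonoid.of b := by
  have : w.toList.length = 1 := hw
  rw [List.length_eq_one_iff] at this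
  obtain ⟨a, ha⟩ := this
  exact ⟨a, FreeMonoid.toList.injective (by rw [ha]; rfl)⟩

lemma ss_decomp {p : PA n} (hp : LenEq 1 p) :
    p = ∑ b : Fin n, p (FreeMonoid.of b) • Xs n b := by
  apply MonoidAlgebra.ext
  apply Finsupp.ext
  intro w
  rw [MonoidAlgebra.coeff_sum, Finsupp.finset_sum_apply]
  have hterm : ∀ b : Fin n, (p (FreeMonoid.of b) • Xs n b) w
      = if FreeMonoid.of b = w then p w else 0 := by
    intro b
    rw [MonoidAlgebra.coeff_smul, Finsupp.smul_apply]
    unfold Xs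
    erw [Finsupp.single_apply]
    split
    · rename_i h; rw [← h]; simp
    · simp
  rw [Finset.sum_congr rfl (fun b _ => hterm b)]
  have hofinj : Function.Injective (FreeMonoid.of : Fin n → FreeMonoid (Fin n)) := by
    intro a b h
    have : [a] = [b] := congrArg FreeMonoid.toList h
    simpa using this
  by_cases hw : ∃ b, w = FreeMonoid.of b
  · obtain ⟨b0, rfl⟩ := hw
    simp only [hofinj.eq_iff]
    rw [Finset.sum_ite_eq' (Finset.univ : Finset (Fin n)) b0 (fun _ => p (FreeMonoid.of b0))]
    simp
  · have hz : (∑ b : Fin n, if FreeMonoid.of b = w then p w else 0) = 0 :=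
      Finset.sum_eq_zero (fun b _ => by
        rw [if_neg]
        intro he
        exact hw ⟨b, he.symm⟩)
    rw [hz]
    by_contra hpw
    have hmem : w ∈ p.coeff.support := Finsupp.mem_support_iff.mpr hpw
    obtain ⟨b, hb⟩ := len_one_exists_of w (hp w hmem)
    exact hw ⟨b, hb⟩

lemma prod_Xs (l : List (Fin n)) :
    (l.map (Xs n)).prod = MonoidAlgebra.single (FreeMonoid.ofList l) 1 := by
  induction l with
  | nil =>
      simp only [List.map_nil, List.prod_nil]
      rfl
  | cons a t ih =>
      rw [List.map_cons, List.prod_cons, ih]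
      unfold Xs
      rw [MonoidAlgebra.single_mul_single, one_mul]
      rfl

lemma cw_ofFn (hn : k < n) (r : Fin (k + 1) → Fin n) :
    cw hn (FreeMonoid.ofList (List.ofFn r))
      = (if r (Fin.last k) = z0 hn then (1 : ℚ) else 0)
        * Matrix.det (Matrix.of fun i j : Fin k =>
            if r i.castSucc = dlet hn j then (1 : ℚ) else 0) := by
  have hto : (FreeMonoid.ofList (List.ofFn r)).toList = List.ofFn r := FreeMonoid.toList_ofList _
  have hlen : (FreeMonoid.ofList (List.ofFn r)).length = k + 1 := by
    show (FreeMonoid.ofList (List.ofFn r)).toList.length = k + 1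
    rw [hto, List.length_ofFn]
  have hlast : (List.ofFn r).getLast? = some (r (Fin.last k)) := by
    rw [List.ofFn_succ' r, List.concat_eq_append]
    exact List.getLast?_concat
  have hgetD : ∀ i : Fin k, (List.ofFn r).getD i.val (z0 hn) = r i.castSucc := by
    intro i
    have hi : i.val < (List.ofFn r).length := by rw [List.length_ofFn]; omega
    rw [List.getD_eq_getElem _ _ hi, List.getElem_ofFn]
    congr 1
  have hmat : (Matrix.of fun i j : Fin k =>
      if (FreeMonoid.ofList (List.ofFn r)).toList.getD i.val (z0 hn) = dlet hn j
      then (1 : ℚ) else 0)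
      = (Matrix.of fun i j : Fin k => if r i.castSucc = dlet hn j then (1 : ℚ) else 0) := by
    funext i j
    rw [Matrix.of_apply, Matrix.of_apply, hto, hgetD]
  unfold cw
  by_cases hz : r (Fin.last k) = z0 hn
  · rw [if_pos ⟨hlen, by rw [hto, hlast, hz]⟩, if_pos hz, one_mul, hmat]
  · rw [if_neg, if_neg hz, zero_mul]
    rintro ⟨-, hcon⟩
    rw [hto, hlast] at hcon
    exact hz (Option.some_injective _ hcon)

lemma cP_ordprod_zero (hn : k < n) (T : Finset (PA n)) (hT : T.card < k)
    {V : Submodule ℚ (PA n)} (hV1 : ∀ v ∈ V, LenEq 1 v)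
    (hVle : V ≤ Submodule.span ℚ (T : Set (PA n)))
    (q : Fin (k + 1) → PA n) (hq : ∀ i, q i ∈ V) :
    cP hn ((List.ofFn q).prod) = 0 := by
  classical
  set c : Fin (k + 1) → Fin n → ℚ := fun i b => q i (FreeMonoid.of b) with hc
  set Tm : MultilinearMap ℚ (fun _ : Fin (k + 1) => PA n) ℚ :=
    (cP hn).compMultilinearMap (MultilinearMap.mkPiAlgebraFin ℚ (k + 1) (PA n)) with hTmdef
  have hTmapp : ∀ m : Fin (k + 1) → PA n, Tm m = cP hn ((List.ofFn m).prod) := by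
    intro m
    rw [hTmdef]
    simp [MultilinearMap.mkPiAlgebraFin_apply]
  have hsingles : ∀ r : Fin (k + 1) → Fin n,
      Tm (fun i => Xs n (r i)) = cw hn (FreeMonoid.ofList (List.ofFn r)) := by
    intro r
    rw [hTmapp]
    have hmap : List.ofFn (fun i => Xs n (r i)) = (List.ofFn r).map (Xs n) :=
      (List.map_ofFn (f := r) (g := Xs n)).symm
    rw [hmap, prod_Xs, cP_single, mul_one]
  have hq' : q = fun i => ∑ b ∈ (Finset.univ : Finset (Fin n)), c i b • Xs n b :=
    funext fun i => ss_decomp (hV1 _ (hq i))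
  have hexp : cP hn ((List.ofFn q).prod)
      = ∑ r : Fin (k + 1) → Fin n,
          (∏ i, c i (r i)) * cw hn (FreeMonoid.ofList (List.ofFn r)) := by
    rw [← hTmapp]
    conv_lhs => rw [hq']
    rw [Tm.map_sum_finset (fun i b => c i b • Xs n b) (fun _ => Finset.univ)]
    rw [Fintype.piFinset_univ]
    apply Finset.sum_congr rfl
    intro r _
    rw [Tm.map_smul_univ (fun i => c i (r i)) (fun i => Xs n (r i)), hsingles]
    rw [smul_eq_mul]
  -- rewrite each term, splitting off the last coordinate
  have hterm : ∀ r : Fin (k + 1) → Fin n,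
      (∏ i, c i (r i)) * cw hn (FreeMonoid.ofList (List.ofFn r))
      = (c (Fin.last k) (r (Fin.last k)) * (if r (Fin.last k) = z0 hn then (1 : ℚ) else 0))
        * ((∏ j : Fin k, c j.castSucc (r j.castSucc))
            * Matrix.det (Matrix.of fun i j : Fin k =>
                if r i.castSucc = dlet hn j then (1 : ℚ) else 0)) := by
    intro r
    rw [cw_ofFn hn r, Fin.prod_univ_castSucc (fun i => c i (r i))]
    ring
  rw [hexp, Finset.sum_congr rfl (fun r _ => hterm r)]
  -- reindex over pairs (x, u)
  set e := (Fin.insertNthEquiv (fun _ : Fin (k + 1) => Fin n) (Fin.last k)).symm with he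
  set F : (Fin (k + 1) → Fin n) → ℚ := fun r =>
      (c (Fin.last k) (r (Fin.last k)) * (if r (Fin.last k) = z0 hn then (1 : ℚ) else 0))
        * ((∏ j : Fin k, c j.castSucc (r j.castSucc))
            * Matrix.det (Matrix.of fun i j : Fin k =>
                if r i.castSucc = dlet hn j then (1 : ℚ) else 0)) with hF
  show ∑ r : Fin (k + 1) → Fin n, F r = 0
  rw [← Equiv.sum_comp e.symm F]
  have hsymm : ∀ p : Fin n × (Fin k → Fin n),
      e.symm p = (Fin.last k).insertNth p.1 p.2 := by
    intro p
    rw [he]; exact rfl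
  have hlastval : ∀ (x : Fin n) (u : Fin k → Fin n),
      ((Fin.last k).insertNth x u : Fin (k + 1) → Fin n) (Fin.last k) = x :=
    fun x u => Fin.insertNth_apply_same _ _ _
  have hcastval : ∀ (x : Fin n) (u : Fin k → Fin n) (j : Fin k),
      ((Fin.last k).insertNth x u : Fin (k + 1) → Fin n) j.castSucc = u j := by
    intro x u j
    have := Fin.insertNth_apply_succAbove (α := fun _ : Fin (k + 1) => Fin n) (Fin.last k) x u j
    rw [Fin.succAbove_last] at this
    exact this
  have hFeval : ∀ p : Fin n × (Fin k → Fin n),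
      F (e.symm p) = (c (Fin.last k) p.1 * (if p.1 = z0 hn then (1 : ℚ) else 0))
        * ((∏ j : Fin k, c j.castSucc (p.2 j))
            * Matrix.det (Matrix.of fun i j : Fin k =>
                if p.2 i = dlet hn j then (1 : ℚ) else 0)) := by
    intro p
    rw [hsymm p, hF]
    simp only [hlastval, hcastval]
  rw [Finset.sum_congr rfl (fun p _ => hFeval p)]
  rw [Fintype.sum_prod_type]
  -- factor out the inner determinant sum
  have hinner : ∑ u : Fin k → Fin n,
      (∏ j : Fin k, c j.castSucc (u j))
        * Matrix.det (Matrix.of fun i j : Fin k =>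
            if u i = dlet hn j then (1 : ℚ) else 0)
      = Matrix.det (Matrix.of fun i j : Fin k => q i.castSucc (FreeMonoid.of (dlet hn j))) := by
    set D := (Matrix.detRowAlternating : ((Fin k → ℚ) [⋀^Fin k]→ₗ[ℚ] ℚ)).toMultilinearMap
      with hD
    set ind : Fin n → (Fin k → ℚ) := fun b j => if b = dlet hn j then (1 : ℚ) else 0 with hind
    have hrowdec : (fun i : Fin k => (fun j => q i.castSucc (FreeMonoid.of (dlet hn j))))
        = fun i : Fin k => ∑ b ∈ (Finset.univ : Finset (Fin n)), c i.castSucc b • ind b := by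
      funext i j
      rw [Finset.sum_apply]
      have : ∀ b : Fin n, (c i.castSucc b • ind b) j
          = if b = dlet hn j then c i.castSucc b else 0 := by
        intro b
        rw [Pi.smul_apply, hind, smul_eq_mul, mul_ite, mul_one, mul_zero]
      rw [Finset.sum_congr rfl (fun b _ => this b)]
      rw [Finset.sum_ite_eq' Finset.univ (dlet hn j) (fun b => c i.castSucc b)]
      simp [hc]
    have hDapp : Matrix.det (Matrix.of fun i j : Fin k => q i.castSucc (FreeMonoid.of (dlet hn j)))
        = D (fun i : Fin k => (fun j => q i.castSucc (FreeMonoid.of (dlet hn j)))) := rfl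
    rw [hDapp, hrowdec]
    rw [D.map_sum_finset (fun i b => c i.castSucc b • ind b) (fun _ => Finset.univ)]
    rw [Fintype.piFinset_univ]
    apply Finset.sum_congr rfl
    intro u _
    rw [D.map_smul_univ (fun i => c i.castSucc (u i)) (fun i => ind (u i))]
    rw [smul_eq_mul]
    rfl
  -- the determinant vanishes
  have hdetzero : Matrix.det (Matrix.of fun i j : Fin k =>
      q i.castSucc (FreeMonoid.of (dlet hn j))) = 0 := by
    set rowmap : PA n →ₗ[ℚ] (Fin k → ℚ) :=
      LinearMap.pi (fun j => (Finsupp.lapply (FreeMonoid.of (dlet hn j))).comp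
        (MonoidAlgebra.coeffLinearEquiv ℚ).toLinearMap) with hrm
    have hrmapp : ∀ p : PA n, rowmap p = fun j => p (FreeMonoid.of (dlet hn j)) := fun p => rfl
    set T' := T.image (fun t => rowmap t) with hT'
    set W := Submodule.span ℚ (T' : Set (Fin k → ℚ)) with hW
    have hmemW : ∀ i : Fin k, rowmap (q i.castSucc) ∈ W := by
      intro i
      have h1 : q i.castSucc ∈ Submodule.span ℚ (T : Set (PA n)) := hVle (hq _)
      have h2 := Submodule.mem_map_of_mem (f := rowmap) h1
      rw [Submodule.map_span] at h2
      rwa [hW, hT', Finset.coe_image]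
    have hnotLI : ¬ LinearIndependent ℚ (fun i : Fin k => rowmap (q i.castSucc)) := by
      intro hLI
      have hLI' : LinearIndependent ℚ
          (fun i : Fin k => (⟨rowmap (q i.castSucc), hmemW i⟩ : W)) := by
        apply LinearIndependent.of_comp W.subtype
        convert hLI
        rfl
      have hcard1 : Fintype.card (Fin k) ≤ Module.finrank ℚ W :=
        hLI'.fintype_card_le_finrank
      have hcard2 : Module.finrank ℚ W ≤ T'.card := finrank_span_finset_le_card T'
      have hcard3 : T'.card ≤ T.card := Finset.card_image_le
      rw [Fintype.card_fin] at hcard1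
      omega
    have := AlternatingMap.map_linearDependent
      (Matrix.detRowAlternating : ((Fin k → ℚ) [⋀^Fin k]→ₗ[ℚ] ℚ))
      (fun i : Fin k => rowmap (q i.castSucc)) hnotLI
    have heq : (Matrix.detRowAlternating : ((Fin k → ℚ) [⋀^Fin k]→ₗ[ℚ] ℚ))
        (fun i : Fin k => rowmap (q i.castSucc))
        = Matrix.det (Matrix.of fun i j : Fin k => q i.castSucc (FreeMonoid.of (dlet hn j))) := by
      rfl
    rw [heq] at this
    exact this
  rw [show (∑ x : Fin n, ∑ u : Fin k → Fin n,
      (c (Fin.last k) x * (if x = z0 hn then (1 : ℚ) else 0))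
        * ((∏ j : Fin k, c j.castSucc (u j))
            * Matrix.det (Matrix.of fun i j : Fin k =>
                if u i = dlet hn j then (1 : ℚ) else 0)))
      = ∑ x : Fin n, (c (Fin.last k) x * (if x = z0 hn then (1 : ℚ) else 0))
          * (∑ u : Fin k → Fin n, (∏ j : Fin k, c j.castSucc (u j))
              * Matrix.det (Matrix.of fun i j : Fin k =>
                  if u i = dlet hn j then (1 : ℚ) else 0))
      from Finset.sum_congr rfl (fun x _ => (Finset.mul_sum _ _ _).symm)]
  rw [hinner, hdetzero]
  simp

lemma cP_vanish_Lvk (hn : k < n) (T : Finset (PA n)) (hT : T.card < k)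
    {V : Submodule ℚ (PA n)} (hV1 : ∀ v ∈ V, LenEq 1 v)
    (hVle : V ≤ Submodule.span ℚ (T : Set (PA n)))
    {x : PA n} (hx : x ∈ Lv V k) : cP hn x = 0 := by
  have h1 := Lv_le_ordSpan V k hx
  clear hx
  induction h1 using Submodule.span_induction with
  | mem y hy =>
      obtain ⟨q, hq, rfl⟩ := hy
      exact cP_ordprod_zero hn T hT hV1 hVle q hq
  | zero => exact map_zero _
  | add y z hy hz ihy ihz => rw [map_add, ihy, ihz, add_zero]
  | smul c y hy ihy => rw [map_smul, ihy, smul_zero]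

end Vanish

section GenVanish

variable (n k : ℕ)

/-- the finite set of degree-one generators -/
noncomputable def Tgen (S : Finset (FG n)) : Finset (PA n) :=
  S.image (fun s => ellcan (k := k) s)

/-- the span of degree-one parts coming from `S` -/
noncomputable def VPgen (S : Finset (FG n)) : Submodule ℚ (PA n) :=
  Submodule.span ℚ ((Tgen n k S : Set (PA n)))

variable {n k}

lemma VPgen_lenEq {S : Finset (FG n)} : ∀ v ∈ VPgen n k S, LenEq 1 v := by
  intro v hv
  induction hv using Submodule.span_induction with
  | mem y hy =>
      obtain ⟨s, -, rfl⟩ := Finset.mem_image.mp hy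
      exact filt_lenEq 1 _
  | zero => exact lenEq_zero_poly 1
  | add y z hy hz ihy ihz => exact ihy.add ihz
  | smul c y hy ihy => exact ihy.smul c

lemma ellcan_mem_VPgen {S : Finset (FG n)} {A : Subgroup (FG n)}
    (hS : Subgroup.closure (S : Set (FG n)) = A) {a : FG n} (ha : a ∈ A) :
    ellcan (k := k) a ∈ VPgen n k S := by
  have hK : A ≤ {
      carrier := {g : FG n | ellcan (k := k) g ∈ VPgen n k S}
      one_mem' := by
        show ellcan (k := k) (1 : FG n) ∈ VPgen n k S
        rw [ellcan_one]
        exact Submodule.zero_mem _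
      mul_mem' := by
        intro x y hx hy
        have hx' : ellcan (k := k) x ∈ VPgen n k S := hx
        have hy' : ellcan (k := k) y ∈ VPgen n k S := hy
        show ellcan (k := k) (x * y) ∈ VPgen n k S
        rw [ellcan_mul]
        exact Submodule.add_mem _ hx' hy'
      inv_mem' := by
        intro x hx
        have hx' : ellcan (k := k) x ∈ VPgen n k S := hx
        show ellcan (k := k) x⁻¹ ∈ VPgen n k S
        rw [ellcan_inv]
        exact Submodule.neg_mem _ hx' } := by
    rw [← hS, Subgroup.closure_le]
    intro s hs
    show ellcan (k := k) s ∈ VPgen n k S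
    exact Submodule.subset_span (Finset.mem_image.mpr ⟨s, hs, rfl⟩)
  exact hK ha

lemma gen_vanish (hk : 1 ≤ k) (hn : k < n) {φ : MulAut (FG n)} (hIA : φ ∈ IAF n k)
    {A B : Subgroup (FG n)} (hfp : IsFreeProductPair A B) (hsupp : SupportedOn φ A B)
    {S : Finset (FG n)} (hcard : S.card < k) (hS : Subgroup.closure (S : Set (FG n)) = A)
    (g : FG n) :
    cR hn (theta (k := k) φ g) = 0 := by
  classical
  set K : Subgroup (FG n) := {
    carrier := {g : FG n | cR hn (theta (k := k) φ g) = 0}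
    one_mem' := by
      show cR hn (theta (k := k) φ 1) = 0
      have h1 : theta (k := k) φ (1 : FG n) = 0 := by
        unfold theta
        rw [map_one, inv_one, mul_one, map_one, Units.val_one, sub_self]
      rw [h1, cR_zero]
    mul_mem' := by
      intro x y hx hy
      show cR hn (theta (k := k) φ (x * y)) = 0
      rw [theta_mul_g hIA, cR_add, hx, hy, add_zero]
    inv_mem' := by
      intro x hx
      show cR hn (theta (k := k) φ x⁻¹) = 0
      have h2 := theta_mul_g hIA x x⁻¹
      rw [mul_inv_cancel] at h2
      have h1 : theta (k := k) φ (1 : FG n) = 0 := by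
        unfold theta
        rw [map_one, inv_one, mul_one, map_one, Units.val_one, sub_self]
      rw [h1] at h2
      have h3 : theta (k := k) φ x⁻¹ = -theta (k := k) φ x :=
        eq_neg_of_add_eq_zero_right h2.symm
      rw [h3, cR_neg, hx, neg_zero] } with hK
  have hB : B ≤ K := by
    intro b hb
    show cR hn (theta (k := k) φ b) = 0
    have : theta (k := k) φ b = 0 := by
      unfold theta
      rw [hsupp.2 b hb, mul_inv_cancel, map_one, Units.val_one, sub_self]
    rw [this, cR_zero]
  have hA : A ≤ K := by
    intro a ha
    show cR hn (theta (k := k) φ a) = 0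
    set w := φ a * a⁻¹ with hw
    have hwA : w ∈ A := by
      have hphia : φ a ∈ A := by
        have h1 : φ a ∈ A.map (MulEquiv.toMonoidHom φ) :=
          Subgroup.mem_map_of_mem _ ha
        rwa [hsupp.1] at h1
      exact A.mul_mem hphia (A.inv_mem ha)
    have hwlcs : w ∈ (⊤ : Subgroup (FG n)).lowerCentralSeries k := hIA a
    set ν : FG n →* (RA n k)ˣ := (mu n k).comp (rho hfp) with hν
    have hgen : ∀ i, InvP (VPgen n k S) 0 ((ν (FreeGroup.of i) : RA n k) - 1) := by
      intro i
      have hrA : rho hfp (FreeGroup.of i) ∈ A := rho_mem hfp _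
      obtain ⟨p, hpge, hp⟩ := mu_JR1_ex (k := k) (rho hfp (FreeGroup.of i))
      refine ⟨p, hp, hpge, ?_⟩
      show filt 1 p ∈ VPgen n k S
      rw [ellcan_rep hp (by omega)]
      exact ellcan_mem_VPgen hS hrA
    have hmain := main_alg (VPgen n k S) ν hgen k w hwlcs
    have hνw : ν w = mu n k w := by
      rw [hν, MonoidHom.comp_apply, rho_fix hfp hwA]
    rw [hνw] at hmain
    obtain ⟨p, hp, hge, htop⟩ := hmain
    have hθ : theta (k := k) φ a = mkR n k p := by
      unfold theta
      rw [← hw, hp]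
    rw [hθ, cR_mk, cP_filt hge]
    exact cP_vanish_Lvk hn (Tgen n k S)
      (lt_of_le_of_lt Finset.card_image_le hcard) VPgen_lenEq (le_refl _) htop
  have htop : (⊤ : Subgroup (FG n)) ≤ K := by
    rw [← sup_eq_top hfp]
    exact sup_le hA hB
  exact htop (Subgroup.mem_top g)

end GenVanish

section Witness

variable {n k : ℕ}

/-- left-normed iterated group commutator over a list of letters -/
def bL (a : Fin n) (l : List (Fin n)) : FG n :=
  l.foldl (fun g b => ⁅g, FreeGroup.of b⁆) (FreeGroup.of a)

/-- left-normed iterated ring commutator over a list of letters -/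
noncomputable def bP (a : Fin n) (l : List (Fin n)) : PA n :=
  l.foldl (fun z b => z * Xs n b - Xs n b * z) (Xs n a)

lemma bL_append (a : Fin n) (l : List (Fin n)) (b : Fin n) :
    bL a (l ++ [b]) = ⁅bL a l, FreeGroup.of b⁆ :=
  List.foldl_concat _ _ _ _

lemma bP_append (a : Fin n) (l : List (Fin n)) (b : Fin n) :
    bP a (l ++ [b]) = bP a l * Xs n b - Xs n b * bP a l :=
  List.foldl_concat _ _ _ _

lemma bL_lcs (a : Fin n) (l : List (Fin n)) :
    bL a l ∈ (⊤ : Subgroup (FG n)).lowerCentralSeries l.length := by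
  induction l using List.reverseRecOn with
  | nil => exact Subgroup.mem_top _
  | append_singleton l b ih =>
      rw [bL_append]
      have hlen : (l ++ [b]).length = l.length + 1 := by simp
      rw [hlen, Subgroup.lowerCentralSeries_succ]
      exact Subgroup.subset_closure
        ⟨bL a l, ih, FreeGroup.of b, Subgroup.mem_top _, (commutatorElement_def _ _).symm⟩

lemma mu_bL (a : Fin n) (l : List (Fin n)) :
    ∃ p, mkR n k p = ((mu n k (bL a l) : (RA n k)ˣ) : RA n k) - 1 ∧
      LenGe n (l.length + 1) p ∧ filt (l.length + 1) p = bP a l := by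
  induction l using List.reverseRecOn with
  | nil =>
      refine ⟨Xs n a, ?_, lenGe_Xs n a, ?_⟩
      · rw [show bL a [] = FreeGroup.of a from rfl, mu_of, xunit_sub_one]
      · show filt ([].length + 1) (Xs n a) = bP a []
        simp only [List.length_nil, zero_add]
        rw [filt_eq_self_of_lenEq (lenEq_Xs n a)]
        rfl
  | append_singleton l b ih =>
      obtain ⟨p, hp, hge, htop⟩ := ih
      set u := mu n k (bL a l) with hu
      set v := mu n k (FreeGroup.of b) with hv
      have hq : mkR n k (Xs n b) = ((v : (RA n k)ˣ) : RA n k) - 1 := by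
        rw [hv, mu_of, xunit_sub_one]
      have hqge : LenGe n 1 (Xs n b) := lenGe_Xs n b
      have hw : u⁻¹ * v⁻¹ ∈ UJ 1 :=
        Subgroup.mul_mem _ ((UJ 1).inv_mem (mu_mem_UJ1 _)) ((UJ 1).inv_mem (mu_mem_UJ1 _))
      obtain ⟨s, hsge, hs⟩ := (hw : JR 1 ((↑(u⁻¹ * v⁻¹) : RA n k) - 1))
      have h1 : LenGe n (l.length + 2) (p * Xs n b - Xs n b * p) := by
        have hb1 : LenGe n (l.length + 2) (p * Xs n b) := hge.mul hqge
        have hb2 : LenGe n (l.length + 2) (Xs n b * p) := by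
          have := hqge.mul hge
          exact this.mono (by omega)
        exact hb1.sub hb2
      refine ⟨(p * Xs n b - Xs n b * p) + (p * Xs n b - Xs n b * p) * s, ?_, ?_, ?_⟩
      · rw [map_add, map_mul, map_sub, map_mul, map_mul, hp, hq, hs]
        rw [bL_append, map_commutatorElement]
        show _ = (↑(u * v * u⁻¹ * v⁻¹) : RA n k) - 1
        rw [commutator_val]
        conv_rhs => rw [mul_assoc, ← Units.val_mul]
        conv_rhs => rw [mul_expand_one]
      · have hlen : (l ++ [b]).length = l.length + 1 := by simp
        rw [hlen]
        exact h1.add ((h1.mul hsge).mono (by omega))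
      · have hlen : (l ++ [b]).length = l.length + 1 := by simp
        rw [hlen, filt_add, filt_sub]
        rw [filt_eq_zero_of_lenGe (h1.mul hsge) (by omega)]
        have hpq : filt (l.length + 2) (p * Xs n b)
            = filt (l.length + 1) p * filt 1 (Xs n b) := filt_mul hge hqge
        have hqp : filt (l.length + 2) (Xs n b * p)
            = filt 1 (Xs n b) * filt (l.length + 1) p := by
          have := filt_mul hqge hge
          rwa [show 1 + (l.length + 1) = l.length + 2 by omega] at this
        rw [hpq, hqp, add_zero, htop, filt_eq_self_of_lenEq (lenEq_Xs n b), bP_append]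

lemma single_mul_Xs (w : FreeMonoid (Fin n)) (c : ℚ) (b : Fin n) :
    MonoidAlgebra.single w c * Xs n b = MonoidAlgebra.single (w * FreeMonoid.of b) c := by
  unfold Xs
  rw [MonoidAlgebra.single_mul_single, mul_one]

lemma Xs_mul_single (w : FreeMonoid (Fin n)) (c : ℚ) (b : Fin n) :
    Xs n b * MonoidAlgebra.single w c = MonoidAlgebra.single (FreeMonoid.of b * w) c := by
  unfold Xs
  rw [MonoidAlgebra.single_mul_single, one_mul]

lemma bP_structure (hn : k < n) (l : List (Fin n)) (hl : ∀ b ∈ l, b ≠ z0 hn) :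
    ∃ jnk : PA n,
      bP (z0 hn) l = ((-1 : ℚ)) ^ l.length •
          MonoidAlgebra.single (FreeMonoid.ofList (l.reverse ++ [z0 hn])) 1 + jnk ∧
      ∀ w ∈ jnk.coeff.support, w.toList.getLast? ≠ some (z0 hn) := by
  induction l using List.reverseRecOn with
  | nil =>
      refine ⟨0, ?_, ?_⟩
      · simp only [List.length_nil, pow_zero, one_smul, add_zero]
        rfl
      · intro w hw
        simp at hw
  | append_singleton l b ih =>
      have hb : b ≠ z0 hn := hl b (by simp)
      obtain ⟨jnk, hrep, hjnk⟩ := ih (fun c hc => hl c (by simp [hc]))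
      set σ : ℚ := (-1 : ℚ) ^ l.length with hσ
      set rw0 : FreeMonoid (Fin n) := FreeMonoid.ofList (l.reverse ++ [z0 hn]) with hrw
      have hexp : bP (z0 hn) (l ++ [b])
          = -(Xs n b * (σ • MonoidAlgebra.single rw0 1))
            + ((σ • MonoidAlgebra.single rw0 1) * Xs n b + (jnk * Xs n b - Xs n b * jnk)) := by
        rw [bP_append, hrep, add_mul, mul_add]
        abel
      have hmain : -(Xs n b * (σ • MonoidAlgebra.single rw0 1))
          = ((-1 : ℚ)) ^ (l ++ [b]).length •
            MonoidAlgebra.single (FreeMonoid.ofList ((l ++ [b]).reverse ++ [z0 hn])) 1 := by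
        rw [mul_smul_comm, Xs_mul_single, ← neg_smul]
        have hsign : -σ = (-1 : ℚ) ^ (l ++ [b]).length := by
          rw [hσ]
          simp [pow_succ]
        rw [hsign]
        congr 2
        show FreeMonoid.ofList (b :: (l.reverse ++ [z0 hn])) = _
        congr 1
        simp
      refine ⟨(σ • MonoidAlgebra.single rw0 1) * Xs n b + (jnk * Xs n b - Xs n b * jnk),
        by rw [hexp, hmain], ?_⟩
      intro w hw
      have hw' := Finsupp.support_add hw
      rw [Finset.mem_union] at hw'
      rcases hw' with hw1 | hw2
      · -- (σ • single rw0 1) * Xs b : ends with b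
        have : (σ • MonoidAlgebra.single rw0 1) * Xs n b
            = MonoidAlgebra.single (rw0 * FreeMonoid.of b) σ := by
          rw [smul_mul_assoc, single_mul_Xs]
          rw [MonoidAlgebra.smul_single']
          rw [mul_one]
        rw [this] at hw1
        have := Finsupp.support_single_subset hw1
        simp only [Finset.mem_singleton] at this
        subst this
        rw [show (rw0 * FreeMonoid.of b).toList = rw0.toList ++ [b] from rfl]
        rw [List.getLast?_concat]
        intro hcon
        exact hb (Option.some_injective _ hcon)
      · have hw2' := Finsupp.support_sub (by exact hw2)
        rw [Finset.mem_union] at hw2'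
        rcases hw2' with hw3 | hw4
        · -- jnk * Xs b
          rcases Finset.mem_mul.mp (MonoidAlgebra.support_coeff_mul_subset jnk (Xs n b) hw3)
            with ⟨x, hx, y, hy, hxy⟩
          have hy' := Finsupp.support_single_subset hy
          simp only [Finset.mem_singleton] at hy'
          subst hy'
          subst hxy
          rw [show (x * FreeMonoid.of b).toList = x.toList ++ [b] from rfl]
          rw [List.getLast?_concat]
          intro hcon
          exact hb (Option.some_injective _ hcon)
        · -- Xs b * jnk
          rcases Finset.mem_mul.mp (MonoidAlgebra.support_coeff_mul_subset (Xs n b) jnk hw4)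
            with ⟨x, hx, y, hy, hxy⟩
          have hx' := Finsupp.support_single_subset hx
          simp only [Finset.mem_singleton] at hx'
          subst hx'
          subst hxy
          rw [show (FreeMonoid.of b * y).toList = b :: y.toList from rfl]
          rcases hyl : y.toList with _ | ⟨c, t⟩
          · rw [List.getLast?_singleton]
            intro hcon
            exact hb (Option.some_injective _ hcon)
          · rw [List.getLast?_cons_cons]
            have := hjnk y hy
            rw [hyl] at this
            exact this

end Witness

section Final

variable {n k : ℕ}

/-- the letters `1, …, k-1` -/
def Lpre (hk : 1 ≤ k) (hn : k < n) : List (Fin n) :=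
  List.ofFn (fun j : Fin (k - 1) => (⟨j.val + 1, by omega⟩ : Fin n))

/-- the letter `k` -/
def tk (hn : k < n) : Fin n := ⟨k, hn⟩

/-- the letters `1, …, k` -/
def Lfull (hk : 1 ≤ k) (hn : k < n) : List (Fin n) := Lpre hk hn ++ [tk hn]

lemma Lpre_length (hk : 1 ≤ k) (hn : k < n) : (Lpre hk hn).length = k - 1 := by
  unfold Lpre
  rw [List.length_ofFn]

lemma Lfull_length (hk : 1 ≤ k) (hn : k < n) : (Lfull hk hn).length = k := by
  unfold Lfull
  rw [List.length_append, Lpre_length, List.length_singleton]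
  omega

lemma Lfull_get (hk : 1 ≤ k) (hn : k < n) (j : ℕ) (hj : j < (Lfull hk hn).length) :
    (Lfull hk hn)[j] = (⟨j + 1, by rw [Lfull_length] at hj; omega⟩ : Fin n) := by
  have hj' : j < k := by rw [Lfull_length] at hj; exact hj
  simp only [Lfull]
  by_cases hcase : j < (Lpre hk hn).length
  · rw [List.getElem_append_left hcase]
    simp only [Lpre]
    rw [List.getElem_ofFn]
  · have hlen := Lpre_length hk hn
    have hj2 : j = k - 1 := by omega
    rw [List.getElem_append_right (by omega)]
    have h0 : j - (Lpre hk hn).length = 0 := by omega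
    simp only [h0, List.getElem_cons_zero]
    show tk hn = _
    unfold tk
    apply Fin.ext
    show k = j + 1
    omega

lemma Lfull_ne_z0 (hk : 1 ≤ k) (hn : k < n) : ∀ b ∈ Lfull hk hn, b ≠ z0 hn := by
  intro b hb
  obtain ⟨j, hj, rfl⟩ := List.getElem_of_mem hb
  rw [Lfull_get hk hn j hj]
  intro hcon
  have := congrArg Fin.val hcon
  simp [z0] at this

lemma cP_eq_zero_of_cw {hn : k < n} {p : PA n} (h : ∀ w ∈ p.coeff.support, cw hn w = 0) :
    cP hn p = 0 := by
  unfold cP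
  rw [LinearMap.comp_apply]
  erw [Finsupp.lsum_apply (S := ℚ)]
  apply Finset.sum_eq_zero
  intro w hw
  simp [h w hw]

lemma cw_rw_one (hk : 1 ≤ k) (hn : k < n) :
    cw hn (FreeMonoid.ofList ((Lfull hk hn).reverse ++ [z0 hn])) = 1 := by
  set L := Lfull hk hn with hL
  have hto : (FreeMonoid.ofList (L.reverse ++ [z0 hn])).toList = L.reverse ++ [z0 hn] :=
    FreeMonoid.toList_ofList _
  have hlen : (FreeMonoid.ofList (L.reverse ++ [z0 hn])).length = k + 1 := by
    show (FreeMonoid.ofList (L.reverse ++ [z0 hn])).toList.length = k + 1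
    rw [hto, List.length_append, List.length_reverse, Lfull_length, List.length_singleton]
  have hlast : (L.reverse ++ [z0 hn]).getLast? = some (z0 hn) := List.getLast?_concat
  have hgetD : ∀ i : Fin k, (L.reverse ++ [z0 hn]).getD i.val (z0 hn)
      = (⟨k - i.val, by omega⟩ : Fin n) := by
    intro i
    have hi : i.val < L.reverse.length := by
      rw [List.length_reverse, Lfull_length]; omega
    have hi2 : i.val < (L.reverse ++ [z0 hn]).length := by
      rw [List.length_append]; omega
    rw [List.getD_eq_getElem _ _ hi2, List.getElem_append_left hi, List.getElem_reverse]
    have hj : L.length - 1 - i.val < L.length := by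
      rw [Lfull_length]; omega
    rw [Lfull_get hk hn _ hj]
    apply Fin.ext
    show L.length - 1 - i.val + 1 = k - i.val
    rw [hL, Lfull_length]
    omega
  unfold cw
  rw [if_pos ⟨hlen, by rw [hto]; exact hlast⟩]
  have hmat : (Matrix.of fun i j : Fin k =>
      if (FreeMonoid.ofList (L.reverse ++ [z0 hn])).toList.getD i.val (z0 hn) = dlet hn j
      then (1 : ℚ) else 0) = (1 : Matrix (Fin k) (Fin k) ℚ) := by
    funext i j
    rw [Matrix.of_apply, hto, hgetD, Matrix.one_apply]
    have hcond : ((⟨k - i.val, by omega⟩ : Fin n) = dlet hn j) ↔ i = j := by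
      constructor
      · intro h
        have := congrArg Fin.val h
        unfold dlet at this
        simp only at this
        apply Fin.ext
        omega
      · intro h
        subst h
        rfl
    simp only [hcond]
  rw [hmat, Matrix.det_one]

lemma cP_bP_value (hk : 1 ≤ k) (hn : k < n) :
    cP hn (bP (z0 hn) (Lfull hk hn)) = (-1 : ℚ) ^ k := by
  obtain ⟨jnk, hrep, hjnk⟩ := bP_structure hn (Lfull hk hn) (Lfull_ne_z0 hk hn)
  rw [hrep, map_add, map_smul]
  have hz : cP hn jnk = 0 := cP_eq_zero_of_cw (fun w hw => cw_eq_zero_of_last (hjnk w hw))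
  rw [hz, add_zero, cP_single, mul_one, cw_rw_one hk hn, Lfull_length]
  simp

/-- the witness automorphism -/
noncomputable def psiW (hk : 1 ≤ k) (hn : k < n) : MulAut (FG n) :=
  MulAut.conj (bL (z0 hn) (Lpre hk hn))

lemma psiW_comm (hk : 1 ≤ k) (hn : k < n) (x : FG n) :
    psiW hk hn x * x⁻¹ = ⁅bL (z0 hn) (Lpre hk hn), x⁆ := by
  unfold psiW
  rw [MulAut.conj_apply, commutatorElement_def]

lemma psiW_mem_IAF (hk : 1 ≤ k) (hn : k < n) : psiW hk hn ∈ IAF n k := by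
  rw [IAF_mem_iff]
  intro x
  rw [psiW_comm]
  have hc : bL (z0 hn) (Lpre hk hn) ∈ (⊤ : Subgroup (FG n)).lowerCentralSeries (k - 1) := by
    have := bL_lcs (z0 hn) (Lpre hk hn)
    rwa [Lpre_length] at this
  have hmem : ⁅bL (z0 hn) (Lpre hk hn), x⁆ ∈ (⊤ : Subgroup (FG n)).lowerCentralSeries (k - 1 + 1) := by
    rw [Subgroup.lowerCentralSeries_succ]
    exact Subgroup.subset_closure
      ⟨_, hc, x, Subgroup.mem_top _, (commutatorElement_def _ _).symm⟩
  rwa [Nat.sub_add_cancel hk] at hmem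

lemma psiW_value (hk : 1 ≤ k) (hn : k < n) :
    cR hn (theta (k := k) (psiW hk hn) (FreeGroup.of (tk hn))) = (-1 : ℚ) ^ k := by
  have hbr : psiW hk hn (FreeGroup.of (tk hn)) * (FreeGroup.of (tk hn))⁻¹
      = bL (z0 hn) (Lfull hk hn) := by
    rw [psiW_comm]
    unfold Lfull
    rw [bL_append]
  obtain ⟨p, hp, hge, htop⟩ := mu_bL (k := k) (z0 hn) (Lfull hk hn)
  have hθ : theta (k := k) (psiW hk hn) (FreeGroup.of (tk hn)) = mkR n k p := by
    unfold theta
    rw [hbr, hp]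
  rw [hθ, cR_mk]
  rw [Lfull_length] at hge htop
  rw [cP_filt hge, htop]
  exact cP_bP_value hk hn

end Final

end JF

/-- **Lower bound on rank.**  For `k ≥ 1` and `n > k`, the group `IA_n(k)` is not generated by
its elements supported on splittings of `F_n` of rank less than `k`: the subgroup generated by
all such elements is a proper subgroup of `IA_n(k)`. -/
theorem stmt1 (k n : ℕ) (hk : 1 ≤ k) (hn : k < n) :
    Subgroup.closure {φ : MulAut (FreeGroup (Fin n)) |
        φ ∈ IAF n k ∧
        ∃ A B : Subgroup (FreeGroup (Fin n)),
          IsFreeProductPair A B ∧ SupportedOn φ A B ∧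
          ∃ S : Finset (FreeGroup (Fin n)), S.card < k ∧ Subgroup.closure (S : Set _) = A}
      < IAF n k := by
  classical
  set Gen : Set (MulAut (FreeGroup (Fin n))) := {φ : MulAut (FreeGroup (Fin n)) |
        φ ∈ IAF n k ∧
        ∃ A B : Subgroup (FreeGroup (Fin n)),
          IsFreeProductPair A B ∧ SupportedOn φ A B ∧
          ∃ S : Finset (FreeGroup (Fin n)), S.card < k ∧ Subgroup.closure (S : Set _) = A}
    with hGen
  have hle : Subgroup.closure Gen ≤ IAF n k :=
    (Subgroup.closure_le _).mpr (fun φ hφ => hφ.1)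
  refine lt_of_le_of_ne hle ?_
  intro heq
  have hψIA : JF.psiW hk hn ∈ IAF n k := JF.psiW_mem_IAF hk hn
  have hψcl : JF.psiW hk hn ∈ Subgroup.closure Gen := by rw [heq]; exact hψIA
  have hzero : (JF.psiW hk hn ∈ IAF n k) ∧
      JF.cR hn (JF.theta (k := k) (JF.psiW hk hn) (FreeGroup.of (JF.tk hn))) = 0 := by
    refine Subgroup.closure_induction
      (p := fun φ _ => φ ∈ IAF n k ∧
        JF.cR hn (JF.theta (k := k) φ (FreeGroup.of (JF.tk hn))) = 0) ?_ ?_ ?_ ?_ hψcl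
    · rintro φ ⟨hIA, A, B, hfp, hsupp, S, hcard, hS⟩
      exact ⟨hIA, JF.gen_vanish hk hn hIA hfp hsupp hcard hS _⟩
    · refine ⟨Subgroup.one_mem _, ?_⟩
      rw [JF.theta_one, JF.cR_zero]
    · rintro φ ψ - - ⟨hφ1, hφ2⟩ ⟨hψ1, hψ2⟩
      refine ⟨Subgroup.mul_mem _ hφ1 hψ1, ?_⟩
      rw [JF.theta_mul_phi hk hφ1 hψ1, JF.cR_add, hφ2, hψ2, add_zero]
    · rintro φ - ⟨hφ1, hφ2⟩
      refine ⟨Subgroup.inv_mem _ hφ1, ?_⟩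
      rw [JF.theta_inv_phi hk hφ1, JF.cR_neg, hφ2, neg_zero]
  have hval := JF.psiW_value hk hn
  rw [hzero.2] at hval
  have : ((-1 : ℚ)) ^ k ≠ 0 := pow_ne_zero _ (by norm_num)
  exact this hval.symm
end

section
/- For all n ≥ 1 and all k ≥ 1, the commutator subgroup satisfies [IA_n, IA_n(k)] ⊆ IA_n(k+1); in particular each quotient IA_n(k)/IA_n(k+1) is abelian. -/
open scoped commutatorElement

section MyAux

variable {G : Type*} [Group G]

lemma my_mem_iff_quot_eq {H : Subgroup G} [H.Normal] {u v : G} :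
    u * v⁻¹ ∈ H ↔ (u : G ⧸ H) = (v : G ⧸ H) := by
  rw [QuotientGroup.eq]
  constructor
  · intro h
    have := Subgroup.Normal.conj_mem ‹H.Normal› _ (H.inv_mem h) u⁻¹
    simpa [mul_assoc] using this
  · intro h
    have := Subgroup.Normal.conj_mem ‹H.Normal› _ (H.inv_mem h) u
    simpa [mul_assoc] using this

lemma my_quot_commute {H : Subgroup G} [H.Normal] {u v : G} (h : ⁅u, v⁆ ∈ H) :
    Commute (u : G ⧸ H) (v : G ⧸ H) := by
  rw [← commutatorElement_eq_one_iff_commute]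
  have h1 : ((⁅u, v⁆ : G) : G ⧸ H) = 1 := (QuotientGroup.eq_one_iff _).mpr h
  simpa [commutatorElement_def] using h1

/-- Three subgroup lemma with a normal target. -/
lemma my_three_subgroups {A B C N : Subgroup G} [N.Normal]
    (h1 : ⁅⁅B, C⁆, A⁆ ≤ N) (h2 : ⁅⁅C, A⁆, B⁆ ≤ N) : ⁅⁅A, B⁆, C⁆ ≤ N := by
  let π := QuotientGroup.mk' N
  have key : ∀ K : Subgroup G, K ≤ N → K.map π = ⊥ := fun K hK =>
    (Subgroup.map_eq_bot_iff K).mpr (by rwa [QuotientGroup.ker_mk'])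
  have h1' : ⁅⁅B.map π, C.map π⁆, A.map π⁆ = ⊥ := by
    rw [← Subgroup.map_commutator, ← Subgroup.map_commutator]; exact key _ h1
  have h2' : ⁅⁅C.map π, A.map π⁆, B.map π⁆ = ⊥ := by
    rw [← Subgroup.map_commutator, ← Subgroup.map_commutator]; exact key _ h2
  have h3 := Subgroup.commutator_commutator_eq_bot_of_rotate h1' h2'
  rw [← Subgroup.map_commutator, ← Subgroup.map_commutator,
    Subgroup.map_eq_bot_iff, QuotientGroup.ker_mk'] at h3
  exact h3

lemma my_lcs_comm (i j : ℕ) :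
    ⁅(⊤ : Subgroup G).lowerCentralSeries i, (⊤ : Subgroup G).lowerCentralSeries j⁆ ≤ (⊤ : Subgroup G).lowerCentralSeries (i + j + 1) := by
  induction j generalizing i with
  | zero =>
    rw [Subgroup.lowerCentralSeries_zero]
    exact le_of_eq rfl
  | succ j ih =>
    have hswap : ⁅(⊤ : Subgroup G).lowerCentralSeries i, (⊤ : Subgroup G).lowerCentralSeries (j + 1)⁆ ≤
        ⁅⁅(⊤ : Subgroup G).lowerCentralSeries j, (⊤ : Subgroup G)⁆, (⊤ : Subgroup G).lowerCentralSeries i⁆ :=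
      Subgroup.commutator_comm_le _ _
    refine hswap.trans (my_three_subgroups ?_ ?_)
    · refine (Subgroup.commutator_mono (Subgroup.commutator_comm_le _ _) le_rfl).trans ?_
      have h1 : ⁅(⊤ : Subgroup G).lowerCentralSeries i, (⊤ : Subgroup G)⁆ = (⊤ : Subgroup G).lowerCentralSeries (i + 1) := rfl
      rw [h1]
      refine (ih (i + 1)).trans (Subgroup.lowerCentralSeries_antitone _ ?_)
      omega
    · refine (Subgroup.commutator_mono (ih i) le_rfl).trans ?_
      have h1 : ⁅(⊤ : Subgroup G).lowerCentralSeries (i + j + 1), (⊤ : Subgroup G)⁆ =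
          (⊤ : Subgroup G).lowerCentralSeries (i + j + 2) := rfl
      rw [h1]
      exact Subgroup.lowerCentralSeries_antitone _ (by omega)

lemma my_comm_calc {K : Type*} [Group K] (C P D Q : K)
    (hC : ∀ y : K, C * y = y * C)
    (hPD : P * D = D * P)
    (hD : D * (P * Q * P⁻¹ * Q⁻¹) = (P * Q * P⁻¹ * Q⁻¹) * D) :
    (C * P) * (D * Q) * (C * P)⁻¹ * (D * Q)⁻¹ = P * Q * P⁻¹ * Q⁻¹ := by
  calc (C * P) * (D * Q) * (C * P)⁻¹ * (D * Q)⁻¹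
      = C * (P * (D * Q) * P⁻¹) * C⁻¹ * (D * Q)⁻¹ := by group
    _ = (P * (D * Q) * P⁻¹) * C * C⁻¹ * (D * Q)⁻¹ := by rw [hC]
    _ = (P * D) * (Q * P⁻¹ * Q⁻¹ * D⁻¹) := by group
    _ = (D * P) * (Q * P⁻¹ * Q⁻¹ * D⁻¹) := by rw [hPD]
    _ = D * (P * Q * P⁻¹ * Q⁻¹) * D⁻¹ := by group
    _ = (P * Q * P⁻¹ * Q⁻¹) * D * D⁻¹ := by rw [hD]
    _ = P * Q * P⁻¹ * Q⁻¹ := by group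

/-- If `φ x * x⁻¹ ∈ γ_{k}` for all `x`, then for `x ∈ γ_m` we get `φ x * x⁻¹ ∈ γ_{m+k}`. -/
lemma my_johnson_step (φ : MulAut G) (k : ℕ)
    (hφ : ∀ x : G, φ x * x⁻¹ ∈ (⊤ : Subgroup G).lowerCentralSeries k) :
    ∀ m : ℕ, ∀ x ∈ (⊤ : Subgroup G).lowerCentralSeries m, φ x * x⁻¹ ∈ (⊤ : Subgroup G).lowerCentralSeries (m + k) := by
  intro m
  induction m with
  | zero => intro x _; simpa using hφ x
  | succ m ih =>
    set H := (⊤ : Subgroup G).lowerCentralSeries (m + 1 + k) with hH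
    haveI hHn : H.Normal := Subgroup.lowerCentralSeries_normal ⊤ (m + 1 + k)
    let S : Subgroup G :=
      { carrier := {x | φ x * x⁻¹ ∈ H}
        one_mem' := by simpa using H.one_mem
        mul_mem' := by
          intro x y hx hy
          have h1 : (φ x * x⁻¹) * (x * (φ y * y⁻¹) * x⁻¹) ∈ H :=
            H.mul_mem hx (hHn.conj_mem _ hy x)
          have heq : (φ x * x⁻¹) * (x * (φ y * y⁻¹) * x⁻¹) = φ (x * y) * (x * y)⁻¹ := by
            simp [map_mul, mul_inv_rev, mul_assoc]
          rwa [heq] at h1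
        inv_mem' := by
          intro x hx
          have h1 : x⁻¹ * (φ x * x⁻¹)⁻¹ * x⁻¹⁻¹ ∈ H := hHn.conj_mem _ (H.inv_mem hx) x⁻¹
          have heq : x⁻¹ * (φ x * x⁻¹)⁻¹ * x⁻¹⁻¹ = φ x⁻¹ * x⁻¹⁻¹ := by
            simp [map_inv, mul_inv_rev, mul_assoc]
          rwa [heq] at h1 }
    suffices hsuff : (⊤ : Subgroup G).lowerCentralSeries (m + 1) ≤ S from fun x hx => hsuff hx
    rw [Subgroup.lowerCentralSeries_succ, Subgroup.commutator_def, Subgroup.closure_le]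
    rintro x ⟨p, hp, q, -, rfl⟩
    show φ (p * q * p⁻¹ * q⁻¹) * (p * q * p⁻¹ * q⁻¹)⁻¹ ∈ H
    rw [my_mem_iff_quot_eq]
    set c := φ p * p⁻¹ with hc
    set d := φ q * q⁻¹ with hd
    have hcmem : c ∈ (⊤ : Subgroup G).lowerCentralSeries (m + k) := ih p hp
    have hdmem : d ∈ (⊤ : Subgroup G).lowerCentralSeries k := hφ q
    have hφp : φ p = c * p := by rw [hc]; group
    have hφq : φ q = d * q := by rw [hd]; group
    have hC : ∀ y : G ⧸ H, (c : G ⧸ H) * y = y * (c : G ⧸ H) := by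
      intro y
      refine QuotientGroup.induction_on y fun g => ?_
      refine (my_quot_commute ?_).eq
      have h1 : ⁅c, g⁆ ∈ ⁅(⊤ : Subgroup G).lowerCentralSeries (m + k), (⊤ : Subgroup G)⁆ :=
        Subgroup.commutator_mem_commutator hcmem (Subgroup.mem_top g)
      have h2 : ⁅(⊤ : Subgroup G).lowerCentralSeries (m + k), (⊤ : Subgroup G)⁆ =
          (⊤ : Subgroup G).lowerCentralSeries (m + k + 1) := rfl
      rw [h2] at h1
      rw [hH, show m + 1 + k = m + k + 1 by omega]
      exact h1
    have hPD : (p : G ⧸ H) * (d : G ⧸ H) = (d : G ⧸ H) * (p : G ⧸ H) := by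
      refine (my_quot_commute ?_).eq
      have h1 := my_lcs_comm m k (Subgroup.commutator_mem_commutator hp hdmem)
      rw [hH, show m + 1 + k = m + k + 1 by omega]
      exact h1
    have hD : (d : G ⧸ H) * ((p : G ⧸ H) * (q : G ⧸ H) * (p : G ⧸ H)⁻¹ * (q : G ⧸ H)⁻¹)
        = ((p : G ⧸ H) * (q : G ⧸ H) * (p : G ⧸ H)⁻¹ * (q : G ⧸ H)⁻¹) * (d : G ⧸ H) := by
      have hpq : p * q * p⁻¹ * q⁻¹ ∈ (⊤ : Subgroup G).lowerCentralSeries (m + 1) := by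
        have h1 : ⁅p, q⁆ ∈ ⁅(⊤ : Subgroup G).lowerCentralSeries m, (⊤ : Subgroup G)⁆ :=
          Subgroup.commutator_mem_commutator hp (Subgroup.mem_top q)
        simpa [commutatorElement_def] using h1
      have h2 := my_lcs_comm k (m + 1) (Subgroup.commutator_mem_commutator hdmem hpq)
      have h3 : ⁅d, p * q * p⁻¹ * q⁻¹⁆ ∈ H := by
        rw [hH]
        exact Subgroup.lowerCentralSeries_antitone _ (by omega : m + 1 + k ≤ k + (m + 1) + 1) h2
      have h4 := (my_quot_commute h3).eq
      simpa [mul_assoc] using h4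
    have key := my_comm_calc (c : G ⧸ H) (p : G ⧸ H) (d : G ⧸ H) (q : G ⧸ H) hC hPD hD
    have hφw : φ (p * q * p⁻¹ * q⁻¹) = (c * p) * (d * q) * (c * p)⁻¹ * (d * q)⁻¹ := by
      simp [map_mul, map_inv, hφp, hφq, mul_assoc, mul_inv_rev]
    rw [hφw]
    simpa [mul_assoc, mul_inv_rev] using key

lemma my_comm_elt (j k : ℕ) (a b : MulAut G)
    (ha : ∀ x : G, a x * x⁻¹ ∈ (⊤ : Subgroup G).lowerCentralSeries j)
    (hb : ∀ x : G, b x * x⁻¹ ∈ (⊤ : Subgroup G).lowerCentralSeries k) :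
    ∀ x : G, ⁅a, b⁆ x * x⁻¹ ∈ (⊤ : Subgroup G).lowerCentralSeries (j + k) := by
  intro x
  set H := (⊤ : Subgroup G).lowerCentralSeries (j + k) with hH
  haveI hHn : H.Normal := Subgroup.lowerCentralSeries_normal ⊤ (j + k)
  set z := a⁻¹ (b⁻¹ x) with hz
  have hx : x = b (a z) := by simp [hz]
  have habx : ⁅a, b⁆ x = a (b z) := by
    rw [commutatorElement_def]
    simp [hz]
  rw [habx, my_mem_iff_quot_eq]
  set c := a z * z⁻¹ with hc
  set d := b z * z⁻¹ with hd
  have hcmem : c ∈ (⊤ : Subgroup G).lowerCentralSeries j := ha z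
  have hdmem : d ∈ (⊤ : Subgroup G).lowerCentralSeries k := hb z
  have haz : a z = c * z := by rw [hc]; group
  have hbz : b z = d * z := by rw [hd]; group
  have e1 : ((a d : G) : G ⧸ H) = (d : G ⧸ H) := by
    rw [← my_mem_iff_quot_eq]
    have h1 := my_johnson_step a j ha k d hdmem
    rw [hH, show j + k = k + j by omega]
    exact h1
  have e2 : ((b c : G) : G ⧸ H) = (c : G ⧸ H) := by
    rw [← my_mem_iff_quot_eq]
    exact my_johnson_step b k hb j c hcmem
  have e3 : (d : G ⧸ H) * (c : G ⧸ H) = (c : G ⧸ H) * (d : G ⧸ H) := by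
    refine (my_quot_commute ?_).eq
    have h1 := my_lcs_comm k j (Subgroup.commutator_mem_commutator hdmem hcmem)
    rw [hH]
    exact Subgroup.lowerCentralSeries_antitone _ (by omega : j + k ≤ k + j + 1) h1
  have lhs : ((a (b z) : G) : G ⧸ H) = ((a d : G) : G ⧸ H) * (c : G ⧸ H) * (z : G ⧸ H) := by
    rw [hbz, map_mul, haz]
    simp [mul_assoc]
  have rhs : ((b (a z) : G) : G ⧸ H) = ((b c : G) : G ⧸ H) * (d : G ⧸ H) * (z : G ⧸ H) := by
    rw [haz, map_mul, hbz]
    simp [mul_assoc]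
  rw [hx, lhs, rhs, e1, e2, e3]

end MyAux

lemma mem_IAF_iff {n k : ℕ} {φ : MulAut (FreeGroup (Fin n))} :
    φ ∈ IAF n k ↔ ∀ x, φ x * x⁻¹ ∈ (⊤ : Subgroup (FreeGroup (Fin n))).lowerCentralSeries k := Iff.rfl


/-- **Johnson filtration is central.**  For all `n, k ≥ 1` we have
`[IA_n, IA_n(k)] ⊆ IA_n(k+1)`; in particular (second conjunct) all commutators of elements of
`IA_n(k)` lie in `IA_n(k+1)`, so the quotient `IA_n(k) ⧸ IA_n(k+1)` is abelian. -/
theorem stmt6 (n k : ℕ) (hn : 1 ≤ n) (hk : 1 ≤ k) :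
    ⁅IAF n 1, IAF n k⁆ ≤ IAF n (k + 1) ∧
    ∀ a b : MulAut (FreeGroup (Fin n)),
      a ∈ IAF n k → b ∈ IAF n k → ⁅a, b⁆ ∈ IAF n (k + 1) := by
  constructor
  · rw [Subgroup.commutator_le]
    intro a ha b hb
    rw [mem_IAF_iff] at ha hb ⊢
    intro x
    have h := my_comm_elt 1 k a b ha hb x
    rwa [show 1 + k = k + 1 by omega] at h
  · intro a b ha hb
    rw [mem_IAF_iff] at ha hb ⊢
    intro x
    have ha' : ∀ y, a y * y⁻¹ ∈ (⊤ : Subgroup (FreeGroup (Fin n))).lowerCentralSeries 1 :=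
      fun y => Subgroup.lowerCentralSeries_antitone _ hk (ha y)
    have h := my_comm_elt 1 k a b ha' hb x
    rwa [show 1 + k = k + 1 by omega] at h
end

section
/- For every g ≥ 2 and every prime p, the group Sp_{2g}(ℤ, p) cannot be generated by fewer than 2g² + g elements. -/
open Matrix

/-- `2g × 2g` integer matrices, written in `g × g` block form with index set
`Fin g ⊕ Fin g`. -/
abbrev SpMat (g : ℕ) := Matrix (Fin g ⊕ Fin g) (Fin g ⊕ Fin g) ℤ

/-- `sε_{ij}(r)`: the symmetric elementary `g × g` matrix, with `(i,j)` and `(j,i)` entries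
equal to `r` (only `(i,i)` if `i = j`) and all other entries `0`. -/
def seps (g : ℕ) (r : ℤ) (i j : Fin g) : Matrix (Fin g) (Fin g) ℤ :=
  if i = j then Matrix.single i i r
  else Matrix.single i j r + Matrix.single j i r

/-- `β_i(r)`: the `g × g` matrix with `(i,i)` and `(i,i')` entries `r`, and `(i',i)` and
`(i',i')` entries `-r` (to be used with `i' = i + 1`). -/
def betaMat (g : ℕ) (r : ℤ) (i i' : Fin g) : Matrix (Fin g) (Fin g) ℤ :=
  Matrix.single i i r + Matrix.single i i' r
    - Matrix.single i' i r - Matrix.single i' i' r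

/-- The generator `𝓧_{ij}(r) = 1 + [[0,0],[sε_{ij}(r),0]]`. -/
def Xmat (g : ℕ) (r : ℤ) (i j : Fin g) : SpMat g :=
  1 + Matrix.fromBlocks 0 0 (seps g r i j) 0

/-- The generator `𝓨_{ij}(r) = 1 + [[0,sε_{ij}(r)],[0,0]]`. -/
def Ymat (g : ℕ) (r : ℤ) (i j : Fin g) : SpMat g :=
  1 + Matrix.fromBlocks 0 (seps g r i j) 0 0

/-- The generator `𝓩_{ij}(r) = 1 + [[ε_{ij}(r),0],[0,-ε_{ji}(r)]]`. -/
def Zmat (g : ℕ) (r : ℤ) (i j : Fin g) : SpMat g :=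
  1 + Matrix.fromBlocks (Matrix.single i j r) 0 0 (-(Matrix.single j i r))

/-- The generator `𝓦_i(r) = 1 + [[β_i(r),0],[0,-β_i(r)ᵀ]]` (with `i' = i + 1`). -/
def Wmat (g : ℕ) (r : ℤ) (i i' : Fin g) : SpMat g :=
  1 + Matrix.fromBlocks (betaMat g r i i') 0 0 (-(betaMat g r i i')ᵀ)

/-- The generator `𝓤_1(r) = 1 + [[ε_{11}(r),ε_{11}(r)],[-ε_{11}(r),-ε_{11}(r)]]`. -/
def Umat (g : ℕ) (hg : 0 < g) (r : ℤ) : SpMat g :=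
  1 + Matrix.fromBlocks (Matrix.single ⟨0, hg⟩ ⟨0, hg⟩ r)
    (Matrix.single ⟨0, hg⟩ ⟨0, hg⟩ r)
    (-(Matrix.single ⟨0, hg⟩ ⟨0, hg⟩ r))
    (-(Matrix.single ⟨0, hg⟩ ⟨0, hg⟩ r))

/-- The level-`p` congruence subgroup `Sp_{2g}(ℤ, p)` of the integral symplectic group: the
kernel of the reduction map `Sp_{2g}(ℤ) → Sp_{2g}(ℤ/p)`, i.e. the symplectic matrices congruent
to the identity mod `p`. -/
def SpCong (g p : ℕ) : Subgroup (Matrix.symplecticGroup (Fin g) ℤ) where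
  carrier := {M | ((M : SpMat g)).map (Int.castRingHom (ZMod p)) = 1}
  one_mem' := by
    show ((1 : SpMat g)).map _ = 1
    exact Matrix.map_one _ (by simp) (by simp)
  mul_mem' := by
    intro a b ha hb
    show (((a * b : Matrix.symplecticGroup (Fin g) ℤ) : SpMat g)).map
      (Int.castRingHom (ZMod p)) = 1
    have h : ((a * b : Matrix.symplecticGroup (Fin g) ℤ) : SpMat g) = (a : SpMat g) * b := rfl
    rw [h, Matrix.map_mul, show ((a : SpMat g)).map (Int.castRingHom (ZMod p)) = 1 from ha,
      show ((b : SpMat g)).map (Int.castRingHom (ZMod p)) = 1 from hb, one_mul]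
  inv_mem' := by
    intro a ha
    have h2 : ((a⁻¹ : Matrix.symplecticGroup (Fin g) ℤ) : SpMat g) * (a : SpMat g) = 1 := by
      have h1 : ((a⁻¹ * a : Matrix.symplecticGroup (Fin g) ℤ) : SpMat g) = 1 := by
        rw [inv_mul_cancel]; rfl
      rw [← h1]; rfl
    show (((a⁻¹ : Matrix.symplecticGroup (Fin g) ℤ) : SpMat g)).map (Int.castRingHom (ZMod p)) = 1
    have h3 := congrArg (fun m : SpMat g => m.map (Int.castRingHom (ZMod p))) h2
    try simp only at h3
    rw [Matrix.map_mul, show ((a : SpMat g)).map (Int.castRingHom (ZMod p)) = 1 from ha,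
      mul_one] at h3
    rw [h3]
    exact Matrix.map_one _ (by simp) (by simp)


namespace Sp10

open Matrix

variable {g p : ℕ} {r : ℤ}

/-! ### entrywise division machinery -/

def dmat (p : ℕ) {n : Type*} [DecidableEq n] (N : Matrix n n ℤ) : Matrix n n ℤ :=
  Matrix.of fun i j => (N i j - (1 : Matrix n n ℤ) i j) / (p : ℤ)

lemma map_one_add_smul (N : SpMat g) :
    ((1 : SpMat g) + (p : ℤ) • N).map (Int.castRingHom (ZMod p)) = 1 := by
  ext i j
  simp only [Matrix.map_apply, Matrix.add_apply, Matrix.smul_apply, smul_eq_mul,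
    Int.coe_castRingHom]
  push_cast
  simp only [ZMod.natCast_self, zero_mul, add_zero]
  by_cases h : i = j <;> simp [Matrix.one_apply, h]

lemma dmat_eq (hp : p ≠ 0) {N N0 : SpMat g} (h : N = 1 + (p : ℤ) • N0) :
    dmat p N = N0 := by
  ext i j
  subst h
  simp only [dmat, Matrix.of_apply, Matrix.add_apply, Matrix.smul_apply, smul_eq_mul,
    add_sub_cancel_left]
  exact Int.mul_ediv_cancel_left _ (by exact_mod_cast hp)

lemma eq_one_add_dmat {N : SpMat g}
    (h : N.map (Int.castRingHom (ZMod p)) = 1) :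
    N = 1 + (p : ℤ) • dmat p N := by
  ext i j
  have h1 : ((N i j - (1 : SpMat g) i j : ℤ) : ZMod p) = 0 := by
    have h2 : ((N i j : ℤ) : ZMod p)
        = (1 : Matrix (Fin g ⊕ Fin g) (Fin g ⊕ Fin g) (ZMod p)) i j := by
      rw [← h]; simp [Matrix.map_apply]
    push_cast
    rw [h2]
    by_cases hij : i = j <;> simp [Matrix.one_apply, hij]
  have hdvd : (p : ℤ) ∣ (N i j - (1 : SpMat g) i j) :=
    (ZMod.intCast_zmod_eq_zero_iff_dvd _ _).mp h1
  simp only [Matrix.add_apply, Matrix.smul_apply, dmat, Matrix.of_apply, smul_eq_mul]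
  rw [Int.mul_ediv_cancel' hdvd]
  ring

/-! ### the index type and the sampling map -/

abbrev Idx (g : ℕ) :=
  (Fin g × Fin g) ⊕ ((Σ i : Fin g, Fin (i.val + 1)) ⊕ (Σ i : Fin g, Fin (i.val + 1)))

lemma card_Idx : Fintype.card (Idx g) = 2 * g ^ 2 + g := by
  have hs : Fintype.card (Σ i : Fin g, Fin (i.val + 1)) = ∑ i ∈ Finset.range g, (i + 1) := by
    rw [Fintype.card_sigma]
    rw [Fin.sum_univ_eq_sum_range (fun i => Fintype.card (Fin (i + 1)))]
    simp
  have hgauss : (∑ i ∈ Finset.range g, (i + 1)) * 2 = g ^ 2 + g := by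
    have h1 : (∑ i ∈ Finset.range g, (i + 1)) = ∑ i ∈ Finset.range (g + 1), i := by
      rw [Finset.sum_range_succ']; simp
    rw [h1, Finset.sum_range_id_mul_two]
    simp only [Nat.add_sub_cancel]
    ring
  simp only [Fintype.card_sum, Fintype.card_prod, Fintype.card_fin, hs]
  rw [show g * g + ((∑ i ∈ Finset.range g, (i + 1)) + (∑ i ∈ Finset.range g, (i + 1)))
      = g * g + (∑ i ∈ Finset.range g, (i + 1)) * 2 by ring, hgauss]
  ring

def Lmap (g p : ℕ) (X : Matrix (Fin g ⊕ Fin g) (Fin g ⊕ Fin g) (ZMod p)) : Idx g → ZMod p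
  | Sum.inl (i, j) => X (Sum.inl i) (Sum.inl j)
  | Sum.inr (Sum.inl ⟨i, k⟩) => X (Sum.inl (Fin.castLE i.isLt k)) (Sum.inr i)
  | Sum.inr (Sum.inr ⟨i, k⟩) => X (Sum.inr (Fin.castLE i.isLt k)) (Sum.inl i)

lemma Lmap_add (X Y : Matrix (Fin g ⊕ Fin g) (Fin g ⊕ Fin g) (ZMod p)) :
    Lmap g p (X + Y) = Lmap g p X + Lmap g p Y := by
  funext idx
  rcases idx with ⟨i, j⟩ | (⟨i, k⟩ | ⟨i, k⟩) <;> simp [Lmap]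

lemma Lmap_zero : Lmap g p 0 = 0 := by
  funext idx
  rcases idx with ⟨i, j⟩ | (⟨i, k⟩ | ⟨i, k⟩) <;> simp [Lmap]

/-! ### the homomorphism -/

def mat (M : SpCong g p) : SpMat g := M.1.1

lemma mat_mem (M : SpCong g p) : (mat M).map (Int.castRingHom (ZMod p)) = 1 := M.2

def vec (g p : ℕ) (M : SpCong g p) : Idx g → ZMod p :=
  Lmap g p ((dmat p (mat M)).map (Int.castRingHom (ZMod p)))

def psi (g p : ℕ) (hp : p ≠ 0) : SpCong g p →* Multiplicative (Idx g → ZMod p) where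
  toFun M := Multiplicative.ofAdd (vec g p M)
  map_one' := by
    have h1 : mat (1 : SpCong g p) = 1 := rfl
    have h2 : dmat p (mat (1 : SpCong g p)) = 0 :=
      dmat_eq hp (by rw [h1]; simp)
    simp only [vec, h2]
    have h3 : (0 : SpMat g).map (Int.castRingHom (ZMod p)) = 0 := by
      ext i j; simp
    rw [h3, Lmap_zero]
    rfl
  map_mul' := by
    intro a b
    have hab : mat (a * b) = mat a * mat b := rfl
    set A0 := dmat p (mat a) with hA0
    set B0 := dmat p (mat b) with hB0
    have ha : mat a = 1 + (p : ℤ) • A0 := eq_one_add_dmat (mat_mem a)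
    have hb : mat b = 1 + (p : ℤ) • B0 := eq_one_add_dmat (mat_mem b)
    have key : mat a * mat b = 1 + (p : ℤ) • (A0 + B0 + (p : ℤ) • (A0 * B0)) := by
      rw [ha, hb]
      simp only [mul_add, add_mul, one_mul, mul_one, smul_add, smul_smul, smul_mul_assoc,
        mul_smul_comm]
      abel
    have hd : dmat p (mat (a * b)) = A0 + B0 + (p : ℤ) • (A0 * B0) := by
      rw [hab]; exact dmat_eq hp key
    have hm : (A0 + B0 + (p : ℤ) • (A0 * B0)).map (Int.castRingHom (ZMod p))
        = A0.map (Int.castRingHom (ZMod p)) + B0.map (Int.castRingHom (ZMod p)) := by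
      ext i j
      simp only [Matrix.map_apply, Matrix.add_apply, Matrix.smul_apply, smul_eq_mul,
        Int.coe_castRingHom]
      push_cast
      simp [ZMod.natCast_self]
    show Multiplicative.ofAdd (vec g p (a * b))
      = Multiplicative.ofAdd (vec g p a) * Multiplicative.ofAdd (vec g p b)
    rw [← ofAdd_add]
    congr 1
    rw [vec, hd, hm, Lmap_add]
    simp only [vec, ← hA0, ← hB0]

/-! ### basic matrix lemmas for the generators -/

lemma std_transpose (i j : Fin g) (c : ℤ) :
    (Matrix.single i j c)ᵀ = Matrix.single j i c := by
  ext a b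
  simp only [Matrix.transpose_apply, Matrix.single, Matrix.of_apply]
  exact if_congr and_comm rfl rfl

lemma seps_transpose (i j : Fin g) : (seps g r i j)ᵀ = seps g r i j := by
  unfold seps
  split
  · rw [std_transpose]
  · rw [Matrix.transpose_add, std_transpose, std_transpose, add_comm]

lemma seps_eq_smul (i j : Fin g) : seps g r i j = r • seps g 1 i j := by
  unfold seps
  split <;> simp [smul_add]

lemma betaMat_eq_smul (i i' : Fin g) : betaMat g r i i' = r • betaMat g 1 i i' := by
  unfold betaMat
  simp [smul_add, smul_sub]

lemma std_eq_smul (i j : Fin g) (c : ℤ) :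
    Matrix.single i j c = c • Matrix.single i j 1 := by
  simp

lemma one_add_blocks (a b c d : Matrix (Fin g) (Fin g) ℤ) :
    (1 : SpMat g) + Matrix.fromBlocks a b c d = Matrix.fromBlocks (1 + a) b c (1 + d) := by
  rw [← Matrix.fromBlocks_one, Matrix.fromBlocks_add, zero_add, zero_add]

lemma Xmat_blocks {i j : Fin g} : Xmat g r i j = Matrix.fromBlocks 1 0 (seps g r i j) 1 := by
  rw [Xmat, one_add_blocks]; simp

lemma Ymat_blocks {i j : Fin g} : Ymat g r i j = Matrix.fromBlocks 1 (seps g r i j) 0 1 := by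
  rw [Ymat, one_add_blocks]; simp

lemma Zmat_blocks {i j : Fin g} : Zmat g r i j
    = Matrix.fromBlocks (1 + Matrix.single i j r) 0 0
      (1 - Matrix.single j i r) := by
  rw [Zmat, one_add_blocks, ← sub_eq_add_neg]

lemma Wmat_blocks {i i' : Fin g} : Wmat g r i i' = Matrix.fromBlocks (1 + betaMat g r i i') 0 0
    (1 - (betaMat g r i i')ᵀ) := by
  rw [Wmat, one_add_blocks, ← sub_eq_add_neg]

lemma Umat_blocks (hg : 0 < g) : Umat g hg r =
    Matrix.fromBlocks (1 + Matrix.single ⟨0, hg⟩ ⟨0, hg⟩ r)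
      (Matrix.single ⟨0, hg⟩ ⟨0, hg⟩ r)
      (-(Matrix.single ⟨0, hg⟩ ⟨0, hg⟩ r))
      (1 - Matrix.single ⟨0, hg⟩ ⟨0, hg⟩ r) := by
  rw [Umat, one_add_blocks, ← sub_eq_add_neg]

lemma fromBlocks_congr {A A' B B' C C' D D' : Matrix (Fin g) (Fin g) ℤ}
    (hA : A = A') (hB : B = B') (hC : C = C') (hD : D = D') :
    Matrix.fromBlocks A B C D = Matrix.fromBlocks A' B' C' D' := by
  rw [hA, hB, hC, hD]

/-! ### symplectic membership -/

lemma lower_mem (S : Matrix (Fin g) (Fin g) ℤ) (hS : Sᵀ = S) :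
    Matrix.fromBlocks 1 0 S 1 ∈ Matrix.symplecticGroup (Fin g) ℤ := by
  rw [SymplecticGroup.mem_iff, Matrix.J, Matrix.fromBlocks_transpose,
    Matrix.fromBlocks_multiply, Matrix.fromBlocks_multiply]
  simp [hS]

lemma upper_mem (S : Matrix (Fin g) (Fin g) ℤ) (hS : Sᵀ = S) :
    Matrix.fromBlocks 1 S 0 1 ∈ Matrix.symplecticGroup (Fin g) ℤ := by
  rw [SymplecticGroup.mem_iff, Matrix.J, Matrix.fromBlocks_transpose,
    Matrix.fromBlocks_multiply, Matrix.fromBlocks_multiply]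
  simp [hS]

lemma diag_mem (A D : Matrix (Fin g) (Fin g) ℤ) (h : A * Dᵀ = 1) :
    Matrix.fromBlocks A 0 0 D ∈ Matrix.symplecticGroup (Fin g) ℤ := by
  have h2 : D * Aᵀ = 1 := by
    have := congrArg Matrix.transpose h
    simpa [Matrix.transpose_mul] using this
  rw [SymplecticGroup.mem_iff, Matrix.J, Matrix.fromBlocks_transpose,
    Matrix.fromBlocks_multiply, Matrix.fromBlocks_multiply]
  simp [h, h2]

lemma X_mem {i j : Fin g} : Xmat g r i j ∈ Matrix.symplecticGroup (Fin g) ℤ := by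
  rw [Xmat_blocks]; exact lower_mem _ (seps_transpose i j)

lemma Y_mem {i j : Fin g} : Ymat g r i j ∈ Matrix.symplecticGroup (Fin g) ℤ := by
  rw [Ymat_blocks]; exact upper_mem _ (seps_transpose i j)

lemma Z_mem {i j : Fin g} (h : i ≠ j) : Zmat g r i j ∈ Matrix.symplecticGroup (Fin g) ℤ := by
  rw [Zmat_blocks]
  apply diag_mem
  rw [Matrix.transpose_sub, Matrix.transpose_one, std_transpose]
  rw [mul_sub, mul_one, add_mul, one_mul,
    Matrix.single_mul_single_of_ne r i j i (Ne.symm h) r]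
  abel

lemma beta_sq {i i' : Fin g} (h : i ≠ i') : betaMat g r i i' * betaMat g r i i' = 0 := by
  have h1 : ∀ a b : Fin g, Matrix.single a i r * Matrix.single i' b r = 0 :=
    fun a b => Matrix.single_mul_single_of_ne r a i i' h r
  have h2 : ∀ a b : Fin g, Matrix.single a i' r * Matrix.single i b r = 0 :=
    fun a b => Matrix.single_mul_single_of_ne r a i' i (Ne.symm h) r
  unfold betaMat
  simp only [add_mul, mul_add, sub_mul, mul_sub, Matrix.single_mul_single_same, h1, h2]
  abel

lemma W_mem {i i' : Fin g} (h : i ≠ i') : Wmat g r i i' ∈ Matrix.symplecticGroup (Fin g) ℤ := by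
  rw [Wmat_blocks]
  apply diag_mem
  rw [Matrix.transpose_sub, Matrix.transpose_one, Matrix.transpose_transpose]
  rw [mul_sub, mul_one, add_mul, one_mul, beta_sq h]
  abel

lemma U_mem (hg : 0 < g) : Umat g hg r ∈ Matrix.symplecticGroup (Fin g) ℤ := by
  rw [Umat_blocks, SymplecticGroup.mem_iff, Matrix.J, Matrix.fromBlocks_transpose,
    Matrix.fromBlocks_multiply, Matrix.fromBlocks_multiply]
  simp only [Matrix.transpose_add, Matrix.transpose_sub, Matrix.transpose_one,
    Matrix.transpose_neg, std_transpose, Matrix.mul_zero, Matrix.zero_mul, Matrix.mul_one,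
    Matrix.one_mul, Matrix.mul_neg, Matrix.neg_mul, neg_neg, zero_add, add_zero,
    Matrix.mul_sub, Matrix.sub_mul, Matrix.add_mul, Matrix.mul_add, sub_zero, zero_sub,
    Matrix.single_mul_single_same, neg_one_smul]
  exact fromBlocks_congr (by abel) (by abel) (by abel) (by abel)

/-! ### smul decompositions of the generators (r = p) -/

lemma Xmat_eq_smul {i j : Fin g} : Xmat g (p : ℤ) i j
    = 1 + (p : ℤ) • Matrix.fromBlocks 0 0 (seps g 1 i j) 0 := by
  rw [Xmat, seps_eq_smul, Matrix.fromBlocks_smul, smul_zero]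

lemma Ymat_eq_smul {i j : Fin g} : Ymat g (p : ℤ) i j
    = 1 + (p : ℤ) • Matrix.fromBlocks 0 (seps g 1 i j) 0 0 := by
  rw [Ymat, seps_eq_smul, Matrix.fromBlocks_smul, smul_zero]

lemma Zmat_eq_smul {i j : Fin g} : Zmat g (p : ℤ) i j
    = 1 + (p : ℤ) • Matrix.fromBlocks (Matrix.single i j 1) 0 0
        (-(Matrix.single j i 1)) := by
  rw [Zmat, std_eq_smul i j, std_eq_smul j i, Matrix.fromBlocks_smul, smul_zero, smul_neg]

lemma Wmat_eq_smul {i i' : Fin g} : Wmat g (p : ℤ) i i'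
    = 1 + (p : ℤ) • Matrix.fromBlocks (betaMat g 1 i i') 0 0 (-(betaMat g 1 i i')ᵀ) := by
  rw [Wmat, betaMat_eq_smul, Matrix.fromBlocks_smul, smul_zero, Matrix.transpose_smul, smul_neg]

lemma Umat_eq_smul (hg : 0 < g) : Umat g hg (p : ℤ)
    = 1 + (p : ℤ) • Matrix.fromBlocks (Matrix.single ⟨0, hg⟩ ⟨0, hg⟩ 1)
        (Matrix.single ⟨0, hg⟩ ⟨0, hg⟩ 1)
        (-(Matrix.single ⟨0, hg⟩ ⟨0, hg⟩ 1))
        (-(Matrix.single ⟨0, hg⟩ ⟨0, hg⟩ 1)) := by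
  rw [Umat, std_eq_smul, Matrix.fromBlocks_smul, smul_neg]

/-! ### the generators as elements of `SpCong` -/

def Xelt (g p : ℕ) (i j : Fin g) : SpCong g p :=
  ⟨⟨Xmat g (p : ℤ) i j, X_mem⟩, by
    show (Xmat g (p : ℤ) i j).map (Int.castRingHom (ZMod p)) = 1
    rw [Xmat_eq_smul]; exact map_one_add_smul _⟩

def Yelt (g p : ℕ) (i j : Fin g) : SpCong g p :=
  ⟨⟨Ymat g (p : ℤ) i j, Y_mem⟩, by
    show (Ymat g (p : ℤ) i j).map (Int.castRingHom (ZMod p)) = 1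
    rw [Ymat_eq_smul]; exact map_one_add_smul _⟩

def Zelt (g p : ℕ) (i j : Fin g) (h : i ≠ j) : SpCong g p :=
  ⟨⟨Zmat g (p : ℤ) i j, Z_mem h⟩, by
    show (Zmat g (p : ℤ) i j).map (Int.castRingHom (ZMod p)) = 1
    rw [Zmat_eq_smul]; exact map_one_add_smul _⟩

def Welt (g p : ℕ) (i i' : Fin g) (h : i ≠ i') : SpCong g p :=
  ⟨⟨Wmat g (p : ℤ) i i', W_mem h⟩, by
    show (Wmat g (p : ℤ) i i').map (Int.castRingHom (ZMod p)) = 1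
    rw [Wmat_eq_smul]; exact map_one_add_smul _⟩

def Uelt (g p : ℕ) (hg : 0 < g) : SpCong g p :=
  ⟨⟨Umat g hg (p : ℤ), U_mem hg⟩, by
    show (Umat g hg (p : ℤ)).map (Int.castRingHom (ZMod p)) = 1
    rw [Umat_eq_smul]; exact map_one_add_smul _⟩

/-! ### entrywise reduction lemmas -/

lemma mmap_zero : (0 : Matrix (Fin g) (Fin g) ℤ).map (Int.castRingHom (ZMod p)) = 0 := by
  ext a b; simp

lemma mmap_add (X Y : Matrix (Fin g) (Fin g) ℤ) :
    (X + Y).map (Int.castRingHom (ZMod p))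
      = X.map (Int.castRingHom (ZMod p)) + Y.map (Int.castRingHom (ZMod p)) := by
  ext a b; simp [Matrix.map_apply]

lemma mmap_sub (X Y : Matrix (Fin g) (Fin g) ℤ) :
    (X - Y).map (Int.castRingHom (ZMod p))
      = X.map (Int.castRingHom (ZMod p)) - Y.map (Int.castRingHom (ZMod p)) := by
  ext a b; simp [Matrix.map_apply]

lemma mmap_neg (X : Matrix (Fin g) (Fin g) ℤ) :
    (-X).map (Int.castRingHom (ZMod p)) = -(X.map (Int.castRingHom (ZMod p))) := by
  ext a b; simp [Matrix.map_apply]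

lemma mmap_std (i j : Fin g) :
    (Matrix.single i j (1 : ℤ)).map (Int.castRingHom (ZMod p))
      = Matrix.single i j (1 : ZMod p) := by
  ext a b
  simp [Matrix.map_apply, Matrix.single, apply_ite (Int.castRingHom (ZMod p))]

def sepsZ (g p : ℕ) (i j : Fin g) : Matrix (Fin g) (Fin g) (ZMod p) :=
  if i = j then Matrix.single i i 1
  else Matrix.single i j 1 + Matrix.single j i 1

lemma mmap_seps (i j : Fin g) :
    (seps g 1 i j).map (Int.castRingHom (ZMod p)) = sepsZ g p i j := by
  unfold seps sepsZ
  split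
  · rw [mmap_std]
  · rw [mmap_add, mmap_std, mmap_std]

lemma mmap_beta (i i' : Fin g) :
    (betaMat g 1 i i').map (Int.castRingHom (ZMod p))
      = Matrix.single i i 1 + Matrix.single i i' 1
        - Matrix.single i' i 1 - Matrix.single i' i' 1 := by
  unfold betaMat
  rw [mmap_sub, mmap_sub, mmap_add, mmap_std, mmap_std, mmap_std, mmap_std]

/-! ### sigma-index helper -/

lemma sigma_mk_eq_iff {g : ℕ} {i i' : Fin g} {k : Fin (i.1 + 1)} {k' : Fin (i'.1 + 1)} :
    (⟨i, k⟩ : Σ a : Fin g, Fin (a.1 + 1)) = ⟨i', k'⟩ ↔ (i.1 = i'.1 ∧ k.1 = k'.1) := by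
  constructor
  · intro h
    obtain ⟨h1, h2⟩ := Sigma.mk.inj_iff.mp h
    subst h1
    rw [heq_iff_eq] at h2
    exact ⟨rfl, by rw [h2]⟩
  · rintro ⟨h1, h2⟩
    rcases i with ⟨i, hi⟩; rcases i' with ⟨i2, hi2⟩
    dsimp only at h1
    subst h1
    rcases k with ⟨k, hk⟩; rcases k' with ⟨k2, hk2⟩
    dsimp only at h2
    subst h2
    rfl

/-! ### values of `Lmap` on the reduced generators -/

lemma vecY_aux (i0 : Fin g) (k : Fin (i0.1 + 1)) :
    Lmap g p (Matrix.fromBlocks 0 (sepsZ g p (Fin.castLE i0.isLt k) i0) 0 0)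
      = Pi.single (Sum.inr (Sum.inl ⟨i0, k⟩)) 1 := by
  funext idx
  have hb := k.isLt
  rcases idx with ⟨x, y⟩ | (⟨i', k'⟩ | ⟨i', k'⟩)
  · simp [Lmap, Pi.single_apply]
  · have hb' := k'.isLt
    simp only [Lmap, Matrix.fromBlocks_apply₁₂, Pi.single_apply, sepsZ, Sum.inr.injEq,
      Sum.inl.injEq]
    by_cases hd : (Fin.castLE i0.isLt k) = i0
    · rw [if_pos hd]
      have hd' : k.1 = i0.1 := by simpa [Fin.ext_iff] using hd
      simp only [Matrix.single, Matrix.of_apply, sigma_mk_eq_iff, Fin.ext_iff,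
        Fin.coe_castLE]
      split_ifs <;> first | rfl | (exfalso; omega)
    · rw [if_neg hd]
      have hd' : k.1 ≠ i0.1 := by simpa [Fin.ext_iff] using hd
      simp only [Matrix.add_apply, Matrix.single, Matrix.of_apply, sigma_mk_eq_iff,
        Fin.ext_iff, Fin.coe_castLE]
      split_ifs <;> first | rfl | (exfalso; omega) | simp
  · simp [Lmap, Pi.single_apply]

lemma vecX_aux (i0 : Fin g) (k : Fin (i0.1 + 1)) :
    Lmap g p (Matrix.fromBlocks 0 0 (sepsZ g p (Fin.castLE i0.isLt k) i0) 0)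
      = Pi.single (Sum.inr (Sum.inr ⟨i0, k⟩)) 1 := by
  funext idx
  have hb := k.isLt
  rcases idx with ⟨x, y⟩ | (⟨i', k'⟩ | ⟨i', k'⟩)
  · simp [Lmap, Pi.single_apply]
  · simp [Lmap, Pi.single_apply]
  · have hb' := k'.isLt
    simp only [Lmap, Matrix.fromBlocks_apply₂₁, Pi.single_apply, sepsZ, Sum.inr.injEq]
    by_cases hd : (Fin.castLE i0.isLt k) = i0
    · rw [if_pos hd]
      have hd' : k.1 = i0.1 := by simpa [Fin.ext_iff] using hd
      simp only [Matrix.single, Matrix.of_apply, sigma_mk_eq_iff, Fin.ext_iff,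
        Fin.coe_castLE]
      split_ifs <;> first | rfl | (exfalso; omega)
    · rw [if_neg hd]
      have hd' : k.1 ≠ i0.1 := by simpa [Fin.ext_iff] using hd
      simp only [Matrix.add_apply, Matrix.single, Matrix.of_apply, sigma_mk_eq_iff,
        Fin.ext_iff, Fin.coe_castLE]
      split_ifs <;> first | rfl | (exfalso; omega) | simp

lemma single_inl_eq_std (a b x y : Fin g) :
    (Pi.single (Sum.inl (a, b) : Idx g) (1 : ZMod p) : Idx g → ZMod p) (Sum.inl (x, y))
      = Matrix.single a b (1 : ZMod p) x y := by
  simp only [Pi.single_apply, Matrix.single, Matrix.of_apply, Sum.inl.injEq,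
    Prod.mk.injEq]
  split_ifs with h1 h2 <;> first | rfl | (exfalso; tauto)

lemma vecZ_aux (i j : Fin g) (D : Matrix (Fin g) (Fin g) (ZMod p)) :
    Lmap g p (Matrix.fromBlocks (Matrix.single i j 1) 0 0 D)
      = Pi.single (Sum.inl (i, j)) 1 := by
  funext idx
  rcases idx with ⟨x, y⟩ | (⟨i', k'⟩ | ⟨i', k'⟩)
  · rw [show (Lmap g p (Matrix.fromBlocks (Matrix.single i j 1) 0 0 D)
      (Sum.inl (x, y))) = Matrix.single i j (1 : ZMod p) x y from rfl,
      single_inl_eq_std]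
  · simp [Lmap, Pi.single_apply]
  · simp [Lmap, Pi.single_apply]

lemma vecW_aux (i i' : Fin g) (D : Matrix (Fin g) (Fin g) (ZMod p)) :
    Lmap g p (Matrix.fromBlocks
      (Matrix.single i i 1 + Matrix.single i i' 1
        - Matrix.single i' i 1 - Matrix.single i' i' 1) 0 0 D)
      = Pi.single (Sum.inl (i, i)) 1 + Pi.single (Sum.inl (i, i')) 1
        - Pi.single (Sum.inl (i', i)) 1 - Pi.single (Sum.inl (i', i')) 1 := by
  funext idx
  rcases idx with ⟨x, y⟩ | (⟨i2, k'⟩ | ⟨i2, k'⟩)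
  · simp only [Pi.add_apply, Pi.sub_apply, single_inl_eq_std]
    rw [show (Lmap g p (Matrix.fromBlocks
      (Matrix.single i i 1 + Matrix.single i i' 1
        - Matrix.single i' i 1 - Matrix.single i' i' 1) 0 0 D)
      (Sum.inl (x, y)))
      = ((Matrix.single i i 1 + Matrix.single i i' 1
        - Matrix.single i' i 1 - Matrix.single i' i' 1
         : Matrix (Fin g) (Fin g) (ZMod p))) x y from rfl]
    simp [Matrix.add_apply, Matrix.sub_apply]
  · simp [Lmap, Pi.single_apply]
  · simp [Lmap, Pi.single_apply]

lemma vecU_aux (z : Fin g) (hz : z.1 = 0) (E : Matrix (Fin g) (Fin g) (ZMod p))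
    (hE : E = Matrix.single z z 1) (k0 : Fin (z.1 + 1)) :
    Lmap g p (Matrix.fromBlocks E E (-E) (-E))
      = Pi.single (Sum.inl (z, z)) 1 + Pi.single (Sum.inr (Sum.inl ⟨z, k0⟩)) 1
        - Pi.single (Sum.inr (Sum.inr ⟨z, k0⟩)) 1 := by
  have hk0 : k0.1 = 0 := by omega
  subst hE
  funext idx
  rcases idx with ⟨x, y⟩ | (⟨i', k'⟩ | ⟨i', k'⟩)
  · simp only [Pi.add_apply, Pi.sub_apply, single_inl_eq_std]
    rw [show (Lmap g p (Matrix.fromBlocks (Matrix.single z z 1)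
        (Matrix.single z z 1) (-(Matrix.single z z 1))
        (-(Matrix.single z z 1))) (Sum.inl (x, y)))
      = Matrix.single z z (1 : ZMod p) x y from rfl]
    simp only [Pi.single_apply, Matrix.single, Matrix.of_apply]
    split_ifs <;> first | rfl | (exfalso; tauto) | simp
  · have hb' := k'.isLt
    simp only [Lmap, Matrix.fromBlocks_apply₁₂, Pi.add_apply, Pi.sub_apply, Pi.single_apply,
      Sum.inr.injEq, Sum.inl.injEq]
    simp only [Matrix.single, Matrix.of_apply, sigma_mk_eq_iff, Fin.ext_iff,
      Fin.coe_castLE, hz, hk0, reduceCtorEq]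
    split_ifs <;> first | rfl | (exfalso; first | omega | tauto) | simp
  · have hb' := k'.isLt
    simp only [Lmap, Matrix.fromBlocks_apply₂₁, Pi.add_apply, Pi.sub_apply, Pi.single_apply,
      Sum.inr.injEq, Matrix.neg_apply]
    simp only [Matrix.single, Matrix.of_apply, sigma_mk_eq_iff, Fin.ext_iff,
      Fin.coe_castLE, hz, hk0, reduceCtorEq]
    split_ifs <;> first | rfl | (exfalso; first | omega | tauto) | simp

/-! ### the `vec`-values of the generator elements -/

lemma vec_elt (hp : p ≠ 0) (M : SpCong g p) (N0 : SpMat g) (h : mat M = 1 + (p : ℤ) • N0) :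
    vec g p M = Lmap g p (N0.map (Int.castRingHom (ZMod p))) := by
  rw [vec, dmat_eq hp h]

lemma vec_Xelt (hp : p ≠ 0) (i0 : Fin g) (k : Fin (i0.1 + 1)) :
    vec g p (Xelt g p (Fin.castLE i0.isLt k) i0) = Pi.single (Sum.inr (Sum.inr ⟨i0, k⟩)) 1 := by
  have hm : mat (Xelt g p (Fin.castLE i0.isLt k) i0)
      = 1 + (p : ℤ) • Matrix.fromBlocks 0 0 (seps g 1 (Fin.castLE i0.isLt k) i0) 0 :=
    Xmat_eq_smul
  rw [vec_elt hp _ _ hm, Matrix.fromBlocks_map, mmap_seps, mmap_zero, vecX_aux]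

lemma vec_Yelt (hp : p ≠ 0) (i0 : Fin g) (k : Fin (i0.1 + 1)) :
    vec g p (Yelt g p (Fin.castLE i0.isLt k) i0) = Pi.single (Sum.inr (Sum.inl ⟨i0, k⟩)) 1 := by
  have hm : mat (Yelt g p (Fin.castLE i0.isLt k) i0)
      = 1 + (p : ℤ) • Matrix.fromBlocks 0 (seps g 1 (Fin.castLE i0.isLt k) i0) 0 0 :=
    Ymat_eq_smul
  rw [vec_elt hp _ _ hm, Matrix.fromBlocks_map, mmap_seps, mmap_zero, vecY_aux]

lemma vec_Zelt (hp : p ≠ 0) (i j : Fin g) (h : i ≠ j) :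
    vec g p (Zelt g p i j h) = Pi.single (Sum.inl (i, j)) 1 := by
  have hm : mat (Zelt g p i j h)
      = 1 + (p : ℤ) • Matrix.fromBlocks (Matrix.single i j 1) 0 0
          (-(Matrix.single j i 1)) :=
    Zmat_eq_smul
  rw [vec_elt hp _ _ hm, Matrix.fromBlocks_map, mmap_std, mmap_zero, vecZ_aux]

lemma vec_Welt (hp : p ≠ 0) (i i' : Fin g) (h : i ≠ i') :
    vec g p (Welt g p i i' h)
      = Pi.single (Sum.inl (i, i)) 1 + Pi.single (Sum.inl (i, i')) 1
        - Pi.single (Sum.inl (i', i)) 1 - Pi.single (Sum.inl (i', i')) 1 := by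
  have hm : mat (Welt g p i i' h)
      = 1 + (p : ℤ) • Matrix.fromBlocks (betaMat g 1 i i') 0 0 (-(betaMat g 1 i i')ᵀ) :=
    Wmat_eq_smul
  rw [vec_elt hp _ _ hm, Matrix.fromBlocks_map, mmap_beta, mmap_zero, vecW_aux]

lemma vec_Uelt (hp : p ≠ 0) (hg : 0 < g) (k0 : Fin ((⟨0, hg⟩ : Fin g).1 + 1)) :
    vec g p (Uelt g p hg)
      = Pi.single (Sum.inl ((⟨0, hg⟩ : Fin g), (⟨0, hg⟩ : Fin g))) 1
        + Pi.single (Sum.inr (Sum.inl ⟨⟨0, hg⟩, k0⟩)) 1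
        - Pi.single (Sum.inr (Sum.inr ⟨⟨0, hg⟩, k0⟩)) 1 := by
  have hm : mat (Uelt g p hg)
      = 1 + (p : ℤ) • Matrix.fromBlocks (Matrix.single ⟨0, hg⟩ ⟨0, hg⟩ 1)
          (Matrix.single ⟨0, hg⟩ ⟨0, hg⟩ 1)
          (-(Matrix.single ⟨0, hg⟩ ⟨0, hg⟩ 1))
          (-(Matrix.single ⟨0, hg⟩ ⟨0, hg⟩ 1)) :=
    Umat_eq_smul hg
  rw [vec_elt hp _ _ hm, Matrix.fromBlocks_map, mmap_neg, mmap_std]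
  exact vecU_aux (p := p) _ rfl _ rfl k0

end Sp10

/-- **Minimal number of generators of `Sp_{2g}(ℤ, p)`.**  For `g ≥ 2` and a prime `p`, the
group `Sp_{2g}(ℤ, p)` cannot be generated by fewer than `2g² + g` elements: any generating
set has at least `2g² + g` elements. -/
theorem stmt10 (g p : ℕ) (hg : 2 ≤ g) (hp : p.Prime)
    (S : Set (SpCong g p)) (hgen : Subgroup.closure S = ⊤) (hfin : S.Finite) :
    2 * g ^ 2 + g ≤ S.ncard := by
  classical
  haveI := Fact.mk hp
  have hp0 : p ≠ 0 := hp.ne_zero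
  have hg0 : 0 < g := by omega
  set T : Set (Sp10.Idx g → ZMod p) := (fun M => Sp10.vec g p M) '' S with hT
  have hTfin : T.Finite := hfin.image _
  -- every vec-value lies in the span of T
  have hspan : ∀ M : ↥(SpCong g p), Sp10.vec g p M ∈ Submodule.span (ZMod p) T := by
    intro M
    have h1 : (Sp10.psi g p hp0) M ∈ Subgroup.closure ((Sp10.psi g p hp0) '' S) := by
      rw [← MonoidHom.map_closure, hgen]
      exact Subgroup.mem_map.mpr ⟨M, Subgroup.mem_top M, rfl⟩
    have h2 : Subgroup.closure ((Sp10.psi g p hp0) '' S)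
        ≤ AddSubgroup.toSubgroup ((Submodule.span (ZMod p) T).toAddSubgroup) := by
      rw [Subgroup.closure_le]
      rintro x ⟨s, hs, rfl⟩
      show Sp10.vec g p s ∈ Submodule.span (ZMod p) T
      exact Submodule.subset_span ⟨s, hs, rfl⟩
    exact h2 h1
  -- basis vectors lie in the span
  have hXs : ∀ (i0 : Fin g) (k : Fin (i0.1 + 1)),
      Pi.single (Sum.inr (Sum.inr ⟨i0, k⟩) : Sp10.Idx g) (1 : ZMod p)
        ∈ Submodule.span (ZMod p) T := by
    intro i0 k
    have := hspan (Sp10.Xelt g p (Fin.castLE i0.isLt k) i0)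
    rwa [Sp10.vec_Xelt hp0] at this
  have hYs : ∀ (i0 : Fin g) (k : Fin (i0.1 + 1)),
      Pi.single (Sum.inr (Sum.inl ⟨i0, k⟩) : Sp10.Idx g) (1 : ZMod p)
        ∈ Submodule.span (ZMod p) T := by
    intro i0 k
    have := hspan (Sp10.Yelt g p (Fin.castLE i0.isLt k) i0)
    rwa [Sp10.vec_Yelt hp0] at this
  have hZs : ∀ (i j : Fin g), i ≠ j →
      Pi.single (Sum.inl (i, j) : Sp10.Idx g) (1 : ZMod p) ∈ Submodule.span (ZMod p) T := by
    intro i j h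
    have := hspan (Sp10.Zelt g p i j h)
    rwa [Sp10.vec_Zelt hp0] at this
  have hdiag : ∀ n : ℕ, ∀ hn : n < g,
      Pi.single (Sum.inl ((⟨n, hn⟩ : Fin g), (⟨n, hn⟩ : Fin g)) : Sp10.Idx g) (1 : ZMod p)
        ∈ Submodule.span (ZMod p) T := by
    intro n
    induction n with
    | zero =>
      intro hn
      have hu := hspan (Sp10.Uelt g p hn)
      rw [Sp10.vec_Uelt hp0 hn ⟨0, by omega⟩] at hu
      have heq : (Pi.single (Sum.inl ((⟨0, hn⟩ : Fin g), (⟨0, hn⟩ : Fin g)) : Sp10.Idx g)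
            (1 : ZMod p) : Sp10.Idx g → ZMod p)
          = ((Pi.single (Sum.inl ((⟨0, hn⟩ : Fin g), (⟨0, hn⟩ : Fin g)) : Sp10.Idx g)
                (1 : ZMod p) : Sp10.Idx g → ZMod p)
              + (Pi.single (Sum.inr (Sum.inl ⟨⟨0, hn⟩, ⟨0, by omega⟩⟩) : Sp10.Idx g)
                (1 : ZMod p) : Sp10.Idx g → ZMod p)
              - (Pi.single (Sum.inr (Sum.inr ⟨⟨0, hn⟩, ⟨0, by omega⟩⟩) : Sp10.Idx g)
                (1 : ZMod p) : Sp10.Idx g → ZMod p))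
            - (Pi.single (Sum.inr (Sum.inl ⟨⟨0, hn⟩, ⟨0, by omega⟩⟩) : Sp10.Idx g)
                (1 : ZMod p) : Sp10.Idx g → ZMod p)
            + (Pi.single (Sum.inr (Sum.inr ⟨⟨0, hn⟩, ⟨0, by omega⟩⟩) : Sp10.Idx g)
                (1 : ZMod p) : Sp10.Idx g → ZMod p) := by
        abel
      rw [heq]
      exact Submodule.add_mem _ (Submodule.sub_mem _ hu (hYs _ _)) (hXs _ _)
    | succ m ih =>
      intro hn
      have hm : m < g := by omega
      set i : Fin g := ⟨m, hm⟩
      set i' : Fin g := ⟨m + 1, hn⟩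
      have hne : i ≠ i' := by
        simp [i, i', Fin.ext_iff]
      have hw := hspan (Sp10.Welt g p i i' hne)
      rw [Sp10.vec_Welt hp0 i i' hne] at hw
      have heq : (Pi.single (Sum.inl (i', i') : Sp10.Idx g) (1 : ZMod p) : Sp10.Idx g → ZMod p)
          = (Pi.single (Sum.inl (i, i) : Sp10.Idx g) (1 : ZMod p) : Sp10.Idx g → ZMod p)
            + (Pi.single (Sum.inl (i, i') : Sp10.Idx g) (1 : ZMod p) : Sp10.Idx g → ZMod p)
            - (Pi.single (Sum.inl (i', i) : Sp10.Idx g) (1 : ZMod p) : Sp10.Idx g → ZMod p)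
            - ((Pi.single (Sum.inl (i, i) : Sp10.Idx g) (1 : ZMod p) : Sp10.Idx g → ZMod p)
              + (Pi.single (Sum.inl (i, i') : Sp10.Idx g) (1 : ZMod p) : Sp10.Idx g → ZMod p)
              - (Pi.single (Sum.inl (i', i) : Sp10.Idx g) (1 : ZMod p) : Sp10.Idx g → ZMod p)
              - (Pi.single (Sum.inl (i', i') : Sp10.Idx g) (1 : ZMod p) : Sp10.Idx g → ZMod p)) := by
        abel
      rw [heq]
      exact Submodule.sub_mem _
        (Submodule.sub_mem _ (Submodule.add_mem _ (ih hm) (hZs i i' hne))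
          (hZs i' i (Ne.symm hne))) hw
  have hAs : ∀ i j : Fin g,
      Pi.single (Sum.inl (i, j) : Sp10.Idx g) (1 : ZMod p) ∈ Submodule.span (ZMod p) T := by
    intro i j
    by_cases h : i = j
    · subst h
      have := hdiag i.1 i.2
      simpa [Fin.eta] using this
    · exact hZs i j h
  -- the span is everything
  have htop : Submodule.span (ZMod p) T = ⊤ := by
    rw [eq_top_iff, ← (Pi.basisFun (ZMod p) (Sp10.Idx g)).span_eq, Submodule.span_le]
    rintro x ⟨idx, rfl⟩
    rw [Pi.basisFun_apply]
    rcases idx with ⟨i, j⟩ | (⟨i, k⟩ | ⟨i, k⟩)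
    · exact hAs i j
    · exact hYs i k
    · exact hXs i k
  -- counting
  haveI : Fintype ↥T := hTfin.fintype
  have h1 : Module.finrank (ZMod p) ↥(Submodule.span (ZMod p) T) ≤ T.toFinset.card :=
    finrank_span_le_card T
  rw [htop, finrank_top] at h1
  rw [Module.finrank_pi, Sp10.card_Idx] at h1
  have h2 : T.toFinset.card = T.ncard := (Set.ncard_eq_toFinset_card' T).symm
  have h3 : T.ncard ≤ S.ncard := Set.ncard_image_le hfin
  omega
end

section
/- Let G be a weak FI-group, let H ⊴ G be a normal weak FI-subgroup, and fix N ≥ 0. Then the collection H^{≤N}, defined by letting H_J^{≤N} be the subgroup of H_J generated by the G_J-conjugates of the subgroups H_J(I) over all I ⊆ J with |I| ≤ N, is itself a normal weak FI-subgroup of G: each H_J^{≤N} is normal in G_J, and G_f(H_J^{≤N}) ⊆ H_K^{≤N} for every injection f : J ↪ K between finite subsets of ℕ. -/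
universe u

/-- Two homomorphisms `A →* B` are conjugate if they differ by post-composition with an inner
automorphism of `B`; a *homomorphism-modulo-conjugacy* is an equivalence class for this
relation. -/
def HomConj {A B : Type*} [Group A] [Group B] (f g : A →* B) : Prop :=
  ∃ b : B, ∀ a : A, g a = b * f a * b⁻¹

/-- The inclusion function `↥I → ↥J` of a pair of finite sets `I ⊆ J ⊆ ℕ`. -/
def finsetIncl {I J : Finset ℕ} (h : I ⊆ J) : I → J := fun x => ⟨x.1, h x.2⟩

theorem finsetIncl_injective {I J : Finset ℕ} (h : I ⊆ J) :
    Function.Injective (finsetIncl h) := by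
  intro a b hab
  have h' := congrArg Subtype.val hab
  exact Subtype.ext h'

/-- A **weak FI-group**: a group `G_I` for each finite subset `I ⊆ ℕ`; a
homomorphism-modulo-conjugacy `G_f : G_I → G_J` for each injection `f : I ↪ J` (presented here
by a representative homomorphism `map f`, with the compatibility conditions `G_{id} = id` and
`G_{g∘f} = G_g ∘ G_f` holding up to conjugacy); and a genuine homomorphism `G_I^J = incl h` for
each pair `I ⊆ J`, representing `G_{i_I^J}` and satisfying `G_J^K ∘ G_I^J = G_I^K` on the
nose. -/
structure WeakFIGroup where
  G : Finset ℕ → Type u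
  [grp : ∀ I, Group (G I)]
  map : ∀ {I J : Finset ℕ} (f : I → J), Function.Injective f → (G I →* G J)
  incl : ∀ {I J : Finset ℕ}, I ⊆ J → (G I →* G J)
  map_id : ∀ I : Finset ℕ, HomConj (map (id : I → I) fun _ _ h => h) (MonoidHom.id (G I))
  map_comp : ∀ {I J K : Finset ℕ} (f : I → J) (g : J → K)
      (hf : Function.Injective f) (hg : Function.Injective g),
      HomConj (map (g ∘ f) (hg.comp hf)) ((map g hg).comp (map f hf))
  incl_represents : ∀ {I J : Finset ℕ} (h : I ⊆ J),
      HomConj (map (finsetIncl h) (finsetIncl_injective h)) (incl h)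
  incl_comp : ∀ {I J K : Finset ℕ} (hIJ : I ⊆ J) (hJK : J ⊆ K),
      (incl hJK).comp (incl hIJ) = incl (hIJ.trans hJK)

attribute [instance] WeakFIGroup.grp

/-- A **normal weak FI-subgroup** `H ⊴ G`: a normal subgroup `H_I ⊴ G_I` for each finite
`I ⊆ ℕ`, with `G_f(H_I) ⊆ H_J` for every injection `f : I ↪ J` (this image is well defined
since `H_J` is normal). -/
structure NormalWeakFISub (𝒢 : WeakFIGroup.{u}) where
  H : ∀ I : Finset ℕ, Subgroup (𝒢.G I)
  normal : ∀ I : Finset ℕ, (H I).Normal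
  stable : ∀ {I J : Finset ℕ} (f : I → J) (hf : Function.Injective f),
      (H I).map (𝒢.map f hf) ≤ H J

/-- `G` is *boundedly generated in degree `A`* if for every finite set `J ⊆ ℕ`, the group
`G_J` is generated by its subgroups `G_J(I) = G_I^J(G_I)` over all `I ⊆ J` with `|I| ≤ A`. -/
def WeakFIGroup.BoundedlyGenerated (𝒢 : WeakFIGroup.{u}) (A : ℕ) : Prop :=
  ∀ J : Finset ℕ,
    (⨆ (I : Finset ℕ) (hIJ : I ⊆ J) (_ : I.card ≤ A),
      Subgroup.map (𝒢.incl hIJ) ⊤) = (⊤ : Subgroup (𝒢.G J))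

/-- `H_J^{≤N}`: the subgroup of `H_J` generated by the `G_J`-conjugates of the subgroups
`H_J(I) = G_I^J(H_I)` over all `I ⊆ J` with `|I| ≤ N`. -/
def NormalWeakFISub.leN {𝒢 : WeakFIGroup.{u}} (H : NormalWeakFISub 𝒢) (N : ℕ)
    (J : Finset ℕ) : Subgroup (𝒢.G J) :=
  Subgroup.normalClosure
    (⋃ (I : Finset ℕ) (hIJ : I ⊆ J) (_ : I.card ≤ N),
      ((H.H I).map (𝒢.incl hIJ) : Set (𝒢.G J)))

/-- `H ⊴ G` is *boundedly normally generated in degree `B`* if for every finite set `J ⊆ ℕ`,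
the group `H_J` is generated by the `G_J`-conjugates of its subgroups `H_J(I)` over all
`I ⊆ J` with `|I| ≤ B`. -/
def NormalWeakFISub.BoundedlyNormallyGenerated {𝒢 : WeakFIGroup.{u}}
    (H : NormalWeakFISub 𝒢) (B : ℕ) : Prop :=
  ∀ J : Finset ℕ, H.leN B J = H.H J

/-- A **central filtration** `{G(k)}_{k ≥ 1}` of a weak FI-group `G`, reindexed here so that
`filt k = G(k+1)`: normal weak FI-subgroups with `G(1) = G`, `G(k) ⊇ G(k+1)`, and
`[G, G(k)] ⊆ G(k+1)` for all `k ≥ 1`. -/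
structure CentralFiltration (𝒢 : WeakFIGroup.{u}) where
  filt : ℕ → NormalWeakFISub 𝒢
  filt_zero : ∀ I : Finset ℕ, (filt 0).H I = ⊤
  filt_antitone : ∀ (k : ℕ) (I : Finset ℕ), (filt (k + 1)).H I ≤ (filt k).H I
  central : ∀ (k : ℕ) (I : Finset ℕ),
      ⁅(⊤ : Subgroup (𝒢.G I)), (filt k).H I⁆ ≤ (filt (k + 1)).H I

instance CentralFiltration.normal_subgroupOf {𝒢 : WeakFIGroup.{u}}
    (C : CentralFiltration 𝒢) (k : ℕ) (I : Finset ℕ) :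
    (((C.filt (k + 1)).H I).subgroupOf ((C.filt k).H I)).Normal :=
  ((C.filt (k + 1)).normal I).subgroupOf _

/-- The central filtration has *finite rank* if each abelian group `G(k)_I ⧸ G(k+1)_I` is
finitely generated. -/
def CentralFiltration.FiniteRank {𝒢 : WeakFIGroup.{u}} (C : CentralFiltration 𝒢) : Prop :=
  ∀ (k : ℕ) (I : Finset ℕ),
    Group.FG ((C.filt k).H I ⧸ ((C.filt (k + 1)).H I).subgroupOf ((C.filt k).H I))

/-- **`H^{≤N}` is a normal weak FI-subgroup.**  For a weak FI-group `G`, a normal weak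
FI-subgroup `H ⊴ G` and `N ≥ 0`, the collection `H^{≤N}` (where `H_J^{≤N}` is generated by the
`G_J`-conjugates of the subgroups `H_J(I)` with `I ⊆ J`, `|I| ≤ N`) is itself a normal weak
FI-subgroup of `G`: each `H_J^{≤N}` is normal in `G_J`, and `G_f(H_J^{≤N}) ⊆ H_K^{≤N}` for
every injection `f : J ↪ K`. -/
theorem stmt14 (𝒢 : WeakFIGroup.{u}) (H : NormalWeakFISub 𝒢) (N : ℕ) :
    (∀ J : Finset ℕ, (H.leN N J).Normal) ∧
    (∀ {J K : Finset ℕ} (f : J → K) (hf : Function.Injective f),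
      (H.leN N J).map (𝒢.map f hf) ≤ H.leN N K) := by
  constructor
  · intro J
    exact Subgroup.normalClosure_normal
  · intro J K f hf
    classical
    have hN : (H.leN N K).Normal := Subgroup.normalClosure_normal
    rw [Subgroup.map_le_iff_le_comap]
    have hcomap : ((H.leN N K).comap (𝒢.map f hf)).Normal := hN.comap _
    apply Subgroup.normalClosure_le_normal
    intro x hx
    simp only [Set.mem_iUnion, SetLike.mem_coe] at hx
    obtain ⟨I, hIJ, hIN, hx⟩ := hx
    obtain ⟨h, hh, rfl⟩ := hx
    rw [SetLike.mem_coe, Subgroup.mem_comap]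
    -- Set up the image finset `I' = f(I)` inside `K`.
    set φ : I → K := fun x => f (finsetIncl hIJ x) with hφdef
    have hφinj : Function.Injective φ := hf.comp (finsetIncl_injective hIJ)
    set I' : Finset ℕ := I.attach.image (fun x => (φ x : ℕ)) with hI'def
    have hI'K : I' ⊆ K := by
      intro n hn
      rw [hI'def, Finset.mem_image] at hn
      obtain ⟨m, _, rfl⟩ := hn
      exact (φ m).2
    have hI'card : I'.card ≤ N := by
      calc I'.card ≤ I.attach.card := Finset.card_image_le
        _ = I.card := Finset.card_attach
        _ ≤ N := hIN
    have hgmem : ∀ x : I, (φ x : ℕ) ∈ I' := by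
      intro x
      rw [hI'def, Finset.mem_image]
      exact ⟨x, Finset.mem_attach _ _, rfl⟩
    set g : I → I' := fun x => ⟨(φ x : ℕ), hgmem x⟩ with hgdef
    have hg : Function.Injective g := by
      intro a b hab
      have hv : (g a : ℕ) = (g b : ℕ) := by rw [hab]
      exact hφinj (Subtype.ext hv)
    have hcomp : (f ∘ finsetIncl hIJ) = finsetIncl hI'K ∘ g := by
      funext x
      exact Subtype.ext rfl
    have key : 𝒢.map (f ∘ finsetIncl hIJ) (hf.comp (finsetIncl_injective hIJ)) =
        𝒢.map (finsetIncl hI'K ∘ g) ((finsetIncl_injective hI'K).comp hg) := by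
      congr 1
    obtain ⟨b, hb⟩ := 𝒢.incl_represents hIJ
    obtain ⟨c, hc⟩ := 𝒢.map_comp (finsetIncl hIJ) f (finsetIncl_injective hIJ) hf
    obtain ⟨d, hd⟩ := 𝒢.map_comp g (finsetIncl hI'K) hg (finsetIncl_injective hI'K)
    obtain ⟨e, he⟩ := 𝒢.incl_represents hI'K
    set S := H.leN N K with hSdef
    -- `w = g(h)` lies in `H_{I'}`.
    set w : 𝒢.G I' := 𝒢.map g hg h with hwdef
    have hw : w ∈ H.H I' :=
      H.stable g hg (Subgroup.mem_map.2 ⟨h, hh, rfl⟩)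
    -- `incl hI'K w` lies in the generating set of `S`.
    have m0 : 𝒢.incl hI'K w ∈ S := by
      apply Subgroup.subset_normalClosure
      refine Set.mem_iUnion.2 ⟨I', Set.mem_iUnion.2 ⟨hI'K, Set.mem_iUnion.2 ⟨hI'card, ?_⟩⟩⟩
      exact ⟨w, hw, rfl⟩
    have m1 : 𝒢.map (finsetIncl hI'K) (finsetIncl_injective hI'K) w ∈ S := by
      have : 𝒢.map (finsetIncl hI'K) (finsetIncl_injective hI'K) w
          = e⁻¹ * 𝒢.incl hI'K w * (e⁻¹)⁻¹ := by
        rw [he w]; group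
      rw [this]
      exact hN.conj_mem _ m0 _
    have m2 : 𝒢.map (finsetIncl hI'K ∘ g) ((finsetIncl_injective hI'K).comp hg) h ∈ S := by
      have : 𝒢.map (finsetIncl hI'K ∘ g) ((finsetIncl_injective hI'K).comp hg) h
          = d⁻¹ * 𝒢.map (finsetIncl hI'K) (finsetIncl_injective hI'K) w * (d⁻¹)⁻¹ := by
        have := hd h
        simp only [MonoidHom.comp_apply] at this
        rw [hwdef, this]; group
      rw [this]
      exact hN.conj_mem _ m1 _
    have m3 : 𝒢.map (f ∘ finsetIncl hIJ) (hf.comp (finsetIncl_injective hIJ)) h ∈ S := by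
      rw [key]; exact m2
    have m4 : 𝒢.map f hf (𝒢.map (finsetIncl hIJ) (finsetIncl_injective hIJ) h) ∈ S := by
      have : 𝒢.map f hf (𝒢.map (finsetIncl hIJ) (finsetIncl_injective hIJ) h)
          = c * 𝒢.map (f ∘ finsetIncl hIJ) (hf.comp (finsetIncl_injective hIJ)) h * c⁻¹ := by
        have := hc h
        simpa only [MonoidHom.comp_apply] using this
      rw [this]
      exact hN.conj_mem _ m3 _
    have : 𝒢.map f hf (𝒢.incl hIJ h)
        = 𝒢.map f hf b * 𝒢.map f hf (𝒢.map (finsetIncl hIJ) (finsetIncl_injective hIJ) h)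
          * (𝒢.map f hf b)⁻¹ := by
      rw [hb h]
      simp [mul_assoc]
    rw [this]
    exact hN.conj_mem _ m4 _
end
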